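/- arXiv:1701.07995 — 13 statements merged into one kernel-verified Lean document; each statement's English description precedes it below -/
import Mathlib

section
/- The weak order on reflexive integer binary relations of size n is a graded lattice: for relations R, S on [n], the meet is (Inc(R) ∪ Inc(S)) ∪ (Dec(R) ∩ Dec(S)) and the join is (Inc(R) ∩ Inc(S)) ∪ (Dec(R) ∪ Dec(S)). -/
/-- Increasing part of an integer binary relation. -/
def IncR {n : ℕ} (R : Set (Fin n × Fin n)) : Set (Fin n × Fin n) := {p | p ∈ R ∧ p.1 ≤ p.2}

/-- Decreasing part of an integer binary relation. -/
def DecR {n : ℕ} (R : Set (Fin n × Fin n)) : Set (Fin n × Fin n) := {p | p ∈ R ∧ p.2 ≤ p.1}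

/-- Reflexivity of a relation on `Fin n`. -/
def IsReflRel {n : ℕ} (R : Set (Fin n × Fin n)) : Prop := ∀ a : Fin n, (a, a) ∈ R

/-- Transitivity. -/
def IsTransRel {n : ℕ} (R : Set (Fin n × Fin n)) : Prop :=
  ∀ u v w : Fin n, (u, v) ∈ R → (v, w) ∈ R → (u, w) ∈ R

/-- Antisymmetry. -/
def IsAntisymRel {n : ℕ} (R : Set (Fin n × Fin n)) : Prop :=
  ∀ u v : Fin n, (u, v) ∈ R → (v, u) ∈ R → u = v

/-- The weak order on integer binary relations. -/
def WOLE {n : ℕ} (R S : Set (Fin n × Fin n)) : Prop := IncR S ⊆ IncR R ∧ DecR R ⊆ DecR S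

/-- Meet in the weak order on integer binary relations. -/
def meetR {n : ℕ} (R S : Set (Fin n × Fin n)) : Set (Fin n × Fin n) :=
  (IncR R ∪ IncR S) ∪ (DecR R ∩ DecR S)

/-- Join in the weak order on integer binary relations. -/
def joinR {n : ℕ} (R S : Set (Fin n × Fin n)) : Set (Fin n × Fin n) :=
  (IncR R ∩ IncR S) ∪ (DecR R ∪ DecR S)

/-- Rank function of the weak order. -/
noncomputable def rankR {n : ℕ} (R : Set (Fin n × Fin n)) : ℤ :=
  ((DecR R).ncard : ℤ) - ((IncR R).ncard : ℤ)

/-- Cover relations of the weak order on reflexive relations. -/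
def CoversRefl {n : ℕ} (R S : Set (Fin n × Fin n)) : Prop :=
  WOLE R S ∧ R ≠ S ∧
    ∀ T : Set (Fin n × Fin n), IsReflRel T → WOLE R T → WOLE T S → T = R ∨ T = S

lemma incr_union_decr {n : ℕ} (R : Set (Fin n × Fin n)) : IncR R ∪ DecR R = R := by
  ext p
  simp only [IncR, DecR, Set.mem_union, Set.mem_setOf_eq]
  constructor
  · rintro (⟨h, _⟩ | ⟨h, _⟩) <;> exact h
  · intro h
    rcases le_total p.1 p.2 with h' | h'
    · exact Or.inl ⟨h, h'⟩
    · exact Or.inr ⟨h, h'⟩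

lemma rel_eq_of_parts {n : ℕ} {R S : Set (Fin n × Fin n)}
    (hI : IncR R = IncR S) (hD : DecR R = DecR S) : R = S := by
  rw [← incr_union_decr R, ← incr_union_decr S, hI, hD]

lemma incr_diff {n : ℕ} (R : Set (Fin n × Fin n)) (p : Fin n × Fin n) :
    IncR (R \ {p}) = IncR R \ {p} := by
  ext q; simp only [IncR, Set.mem_diff, Set.mem_setOf_eq, Set.mem_singleton_iff]; tauto

lemma decr_diff {n : ℕ} (R : Set (Fin n × Fin n)) {p : Fin n × Fin n}
    (hp : ¬ p.2 ≤ p.1) : DecR (R \ {p}) = DecR R := by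
  ext q
  simp only [DecR, Set.mem_diff, Set.mem_setOf_eq, Set.mem_singleton_iff]
  constructor
  · rintro ⟨⟨h, _⟩, h2⟩; exact ⟨h, h2⟩
  · rintro ⟨h, h2⟩
    refine ⟨⟨h, ?_⟩, h2⟩
    rintro rfl; exact hp h2

lemma incr_insert {n : ℕ} (R : Set (Fin n × Fin n)) {p : Fin n × Fin n}
    (hp : ¬ p.1 ≤ p.2) : IncR (insert p R) = IncR R := by
  ext q
  simp only [IncR, Set.mem_insert_iff, Set.mem_setOf_eq]
  constructor
  · rintro ⟨rfl | h, h2⟩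
    · exact absurd h2 hp
    · exact ⟨h, h2⟩
  · rintro ⟨h, h2⟩; exact ⟨Or.inr h, h2⟩

lemma decr_insert {n : ℕ} (R : Set (Fin n × Fin n)) {p : Fin n × Fin n}
    (hp : p.2 ≤ p.1) : DecR (insert p R) = insert p (DecR R) := by
  ext q
  simp only [DecR, Set.mem_insert_iff, Set.mem_setOf_eq]
  constructor
  · rintro ⟨rfl | h, h2⟩
    · exact Or.inl rfl
    · exact Or.inr ⟨h, h2⟩
  · rintro (rfl | ⟨h, h2⟩)
    · exact ⟨Or.inl rfl, hp⟩
    · exact ⟨Or.inr h, h2⟩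

/-- The weak order on reflexive integer binary relations of size n is a graded lattice,
with the stated meet and join. -/
theorem weakOrder_relations_graded_lattice (n : ℕ) :
    (∀ R : Set (Fin n × Fin n), WOLE R R) ∧
    (∀ R S : Set (Fin n × Fin n), IsReflRel R → IsReflRel S → WOLE R S → WOLE S R → R = S) ∧
    (∀ R S T : Set (Fin n × Fin n), WOLE R S → WOLE S T → WOLE R T) ∧
    (∀ R S : Set (Fin n × Fin n), IsReflRel R → IsReflRel S →
      IsReflRel (meetR R S) ∧ WOLE (meetR R S) R ∧ WOLE (meetR R S) S ∧
        (∀ T : Set (Fin n × Fin n), IsReflRel T → WOLE T R → WOLE T S → WOLE T (meetR R S)) ∧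
      IsReflRel (joinR R S) ∧ WOLE R (joinR R S) ∧ WOLE S (joinR R S) ∧
        (∀ T : Set (Fin n × Fin n), IsReflRel T → WOLE R T → WOLE S T → WOLE (joinR R S) T)) ∧
    (∀ R S : Set (Fin n × Fin n), IsReflRel R → IsReflRel S → CoversRefl R S →
      rankR S = rankR R + 1) := by
  refine ⟨?_, ?_, ?_, ?_, ?_⟩
  · intro R; exact ⟨subset_rfl, subset_rfl⟩
  · intro R S _ _ h1 h2
    exact rel_eq_of_parts (subset_antisymm h2.1 h1.1) (subset_antisymm h1.2 h2.2)
  · intro R S T h1 h2; exact ⟨h2.1.trans h1.1, h1.2.trans h2.2⟩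
  · intro R S hR hS
    refine ⟨?_, ⟨?_, ?_⟩, ⟨?_, ?_⟩, ?_, ?_, ⟨?_, ?_⟩, ⟨?_, ?_⟩, ?_⟩
    · intro a; exact Or.inl (Or.inl ⟨hR a, le_rfl⟩)
    · -- IncR R ⊆ IncR (meetR R S)
      intro p hp; exact ⟨Or.inl (Or.inl hp), hp.2⟩
    · -- DecR (meetR R S) ⊆ DecR R
      rintro ⟨a, b⟩ ⟨hm, h21⟩
      rcases hm with (h | h) | ⟨h, _⟩
      · exact ⟨h.1, h21⟩
      · have : a = b := le_antisymm h.2 h21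
        subst this
        exact ⟨hR a, le_rfl⟩
      · exact h
    · -- IncR S ⊆ IncR (meetR R S)
      intro p hp; exact ⟨Or.inl (Or.inr hp), hp.2⟩
    · -- DecR (meetR R S) ⊆ DecR S
      rintro ⟨a, b⟩ ⟨hm, h21⟩
      rcases hm with (h | h) | ⟨_, h⟩
      · have : a = b := le_antisymm h.2 h21
        subst this
        exact ⟨hS a, le_rfl⟩
      · exact ⟨h.1, h21⟩
      · exact h
    · -- glb
      intro T hT hTR hTS
      constructor
      · rintro ⟨a, b⟩ ⟨hm, h12⟩
        rcases hm with (h | h) | ⟨h, _⟩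
        · exact hTR.1 h
        · exact hTS.1 h
        · have : a = b := le_antisymm h12 h.2
          subst this
          exact ⟨hT a, le_rfl⟩
      · intro p hp
        exact ⟨Or.inr ⟨hTR.2 hp, hTS.2 hp⟩, hp.2⟩
    · intro a; exact Or.inr (Or.inl ⟨hR a, le_rfl⟩)
    · -- IncR (joinR R S) ⊆ IncR R
      rintro ⟨a, b⟩ ⟨hm, h12⟩
      rcases hm with ⟨h, _⟩ | (h | h)
      · exact h
      · exact ⟨h.1, h12⟩
      · have : a = b := le_antisymm h12 h.2
        subst this
        exact ⟨hR a, le_rfl⟩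
    · -- DecR R ⊆ DecR (joinR R S)
      intro p hp; exact ⟨Or.inr (Or.inl hp), hp.2⟩
    · -- IncR (joinR R S) ⊆ IncR S
      rintro ⟨a, b⟩ ⟨hm, h12⟩
      rcases hm with ⟨_, h⟩ | (h | h)
      · exact h
      · have : a = b := le_antisymm h12 h.2
        subst this
        exact ⟨hS a, le_rfl⟩
      · exact ⟨h.1, h12⟩
    · -- DecR S ⊆ DecR (joinR R S)
      intro p hp; exact ⟨Or.inr (Or.inr hp), hp.2⟩
    · -- lub
      intro T hT hRT hST
      constructor
      · intro p hp
        exact ⟨Or.inl ⟨hRT.1 hp, hST.1 hp⟩, hp.2⟩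
      · rintro ⟨a, b⟩ ⟨hm, h21⟩
        rcases hm with ⟨h, _⟩ | (h | h)
        · have : a = b := le_antisymm h.2 h21
          subst this
          exact ⟨hT a, le_rfl⟩
        · exact hRT.2 h
        · exact hST.2 h
  · -- graded
    intro R S hR hS hcov
    obtain ⟨⟨hIS, hDR⟩, hne, hmax⟩ := hcov
    by_cases hI : IncR R = IncR S
    · -- decreasing part grows
      obtain ⟨p, hpS, hpR⟩ : ∃ p, p ∈ DecR S ∧ p ∉ DecR R := by
        by_contra h
        push_neg at h
        exact hne (rel_eq_of_parts hI (subset_antisymm hDR h))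
      obtain ⟨a, b⟩ := p
      have h21 : b ≤ a := hpS.2
      have hnot12 : ¬ (a ≤ b) := by
        intro h
        have : a = b := le_antisymm h h21
        subst this
        exact hpR ⟨hR a, le_rfl⟩
      have hpnotR : (a, b) ∉ R := fun h => hpR ⟨h, h21⟩
      have hTrefl : IsReflRel (insert (a, b) R) := fun c => Or.inr (hR c)
      have hIT : IncR (insert (a, b) R) = IncR R := incr_insert R hnot12
      have hDT : DecR (insert (a, b) R) = insert (a, b) (DecR R) := decr_insert R h21
      have hRT : WOLE R (insert (a, b) R) := by
        refine ⟨?_, ?_⟩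
        · rw [hIT]
        · rw [hDT]; exact Set.subset_insert _ _
      have hTS : WOLE (insert (a, b) R) S := by
        refine ⟨?_, ?_⟩
        · rw [hIT]; exact hIS
        · rw [hDT]; exact Set.insert_subset hpS hDR
      rcases hmax _ hTrefl hRT hTS with h | h
      · exfalso
        have : (a, b) ∈ R := h ▸ Set.mem_insert _ _
        exact hpnotR this
      · have hIS' : IncR S = IncR R := by rw [← h, hIT]
        have hDS' : DecR S = insert (a, b) (DecR R) := by rw [← h, hDT]
        unfold rankR
        rw [hIS', hDS', Set.ncard_insert_of_notMem hpR (Set.toFinite _)]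
        push_cast
        ring
    · -- increasing part shrinks
      obtain ⟨p, hpR, hpS⟩ : ∃ p, p ∈ IncR R ∧ p ∉ IncR S := by
        by_contra h
        push_neg at h
        exact hI (subset_antisymm h hIS)
      obtain ⟨a, b⟩ := p
      have h12 : a ≤ b := hpR.2
      have hnot21 : ¬ (b ≤ a) := by
        intro h
        have : a = b := le_antisymm h12 h
        subst this
        exact hpS ⟨hS a, le_rfl⟩
      have hTrefl : IsReflRel (R \ {(a, b)}) := by
        refine fun c => ⟨hR c, fun h => ?_⟩
        rw [Set.mem_singleton_iff, Prod.mk.injEq] at h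
        obtain ⟨h1, h2⟩ := h
        subst h1; subst h2
        exact hnot21 le_rfl
      have hIT : IncR (R \ {(a, b)}) = IncR R \ {(a, b)} := incr_diff R _
      have hDT : DecR (R \ {(a, b)}) = DecR R := decr_diff R hnot21
      have hRT : WOLE R (R \ {(a, b)}) := by
        refine ⟨?_, ?_⟩
        · rw [hIT]; exact Set.diff_subset
        · rw [hDT]
      have hTS : WOLE (R \ {(a, b)}) S := by
        refine ⟨?_, ?_⟩
        · rw [hIT]
          intro q hq
          refine ⟨hIS hq, fun h => ?_⟩
          rw [Set.mem_singleton_iff] at h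
          exact hpS (h ▸ hq)
        · rw [hDT]; exact hDR
      rcases hmax _ hTrefl hRT hTS with h | h
      · exfalso
        have hm : (a, b) ∈ R \ {(a, b)} := h.symm ▸ hpR.1
        exact hm.2 rfl
      · have hIS' : IncR S = IncR R \ {(a, b)} := by rw [← h, hIT]
        have hDS' : DecR S = DecR R := by rw [← h, hDT]
        have hc : (IncR R \ {(a, b)}).ncard + 1 = (IncR R).ncard :=
          Set.ncard_diff_singleton_add_one hpR (Set.toFinite _)
        unfold rankR
        rw [hIS', hDS']
        omega
end

section
/- If R and S are reflexive antisymmetric relations on [n], then their weak order meet (Inc(R) ∪ Inc(S)) ∪ (Dec(R) ∩ Dec(S)) is antisymmetric, and similarly their weak order join (Inc(R) ∩ Inc(S)) ∪ (Dec(R) ∪ Dec(S)) is antisymmetric. Hence antisymmetric relations form a sublattice of the weak order on integer binary relations. -/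
/-- The weak order meet and join of two reflexive antisymmetric relations are
antisymmetric: antisymmetric relations form a sublattice of the weak order. -/
theorem meetR_joinR_antisym (n : ℕ) (R S : Set (Fin n × Fin n))
    (hR : IsReflRel R) (hS : IsReflRel S)
    (haR : IsAntisymRel R) (haS : IsAntisymRel S) :
    IsAntisymRel (meetR R S) ∧ IsAntisymRel (joinR R S) := by
  constructor
  · intro u v huv hvu
    simp only [meetR, IncR, DecR, Set.mem_union, Set.mem_inter_iff, Set.mem_setOf_eq] at huv hvu
    rcases huv with (⟨h1, h2⟩ | ⟨h1, h2⟩) | ⟨⟨h1, h2⟩, h3, h4⟩ <;>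
      rcases hvu with (⟨g1, g2⟩ | ⟨g1, g2⟩) | ⟨⟨g1, g2⟩, g3, g4⟩ <;>
      first
        | exact le_antisymm h2 g2
        | exact le_antisymm g2 h2
        | exact haR u v h1 g1
        | exact haS u v h1 g1
        | exact haR u v h1 g1
        | exact haS u v h3 g3
        | exact haS u v h1 g3
        | exact haS u v h3 g1
  · intro u v huv hvu
    simp only [joinR, IncR, DecR, Set.mem_union, Set.mem_inter_iff, Set.mem_setOf_eq] at huv hvu
    rcases huv with ⟨⟨h1, h2⟩, h3, h4⟩ | (⟨h1, h2⟩ | ⟨h1, h2⟩) <;>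
      rcases hvu with ⟨⟨g1, g2⟩, g3, g4⟩ | (⟨g1, g2⟩ | ⟨g1, g2⟩) <;>
      first
        | exact le_antisymm h2 g2
        | exact le_antisymm g2 h2
        | exact le_antisymm h4 g4
        | exact le_antisymm g4 h4
        | exact le_antisymm h2 g4
        | exact le_antisymm g2 h4
        | exact le_antisymm h4 g2
        | exact le_antisymm g4 h2
        | exact haR u v h1 g1
        | exact haS u v h1 g1
        | exact haS u v h3 g3
        | exact haS u v h3 g1
        | exact haS u v h1 g3
end

section
/- In the weak order restricted to reflexive antisymmetric relations on [n], the relations covering a given antisymmetric relation R are exactly: (1) R \ {(a,b)} for a < b with a R b, and (2) R ∪ {(b,a)} for a < b with neither a R b nor b R a. -/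
/-- Cover relations of the weak order restricted to reflexive antisymmetric relations. -/
def CoversAS {n : ℕ} (R S : Set (Fin n × Fin n)) : Prop :=
  WOLE R S ∧ R ≠ S ∧
    ∀ T : Set (Fin n × Fin n), IsReflRel T → IsAntisymRel T →
      WOLE R T → WOLE T S → T = R ∨ T = S

section Aux
variable {n : ℕ}

lemma mem_IncR {R : Set (Fin n × Fin n)} {x y : Fin n} :
    (x, y) ∈ IncR R ↔ (x, y) ∈ R ∧ x ≤ y := Iff.rfl

lemma mem_DecR {R : Set (Fin n × Fin n)} {x y : Fin n} :
    (x, y) ∈ DecR R ↔ (x, y) ∈ R ∧ y ≤ x := Iff.rfl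

lemma cover_inc_case {R S : Set (Fin n × Fin n)}
    (hR : IsReflRel R) (haR : IsAntisymRel R)
    (h : CoversAS R S) {a b : Fin n} (hab : a < b)
    (hmem : (a, b) ∈ R) (hnot : (a, b) ∉ S) : S = R \ {(a, b)} := by
  obtain ⟨⟨hIS, hDR⟩, hne, hmin⟩ := h
  have hTrefl : IsReflRel (R \ {(a, b)}) := fun c => by
    refine ⟨hR c, ?_⟩
    simp only [Set.mem_singleton_iff, Prod.mk.injEq]
    rintro ⟨rfl, rfl⟩; exact lt_irrefl _ hab
  have hTanti : IsAntisymRel (R \ {(a, b)}) := fun u v hu hv => haR u v hu.1 hv.1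
  have hRT : WOLE R (R \ {(a, b)}) := by
    constructor
    · intro p hp; exact ⟨hp.1.1, hp.2⟩
    · intro p hp
      refine ⟨⟨hp.1, ?_⟩, hp.2⟩
      simp only [Set.mem_singleton_iff]
      rintro rfl
      exact absurd hp.2 (not_le.mpr hab)
  have hTS : WOLE (R \ {(a, b)}) S := by
    constructor
    · intro p hp
      have h2 := hIS hp
      refine ⟨⟨h2.1, ?_⟩, h2.2⟩
      simp only [Set.mem_singleton_iff]
      rintro rfl; exact hnot hp.1
    · intro p hp
      exact hDR ⟨hp.1.1, hp.2⟩
  rcases hmin _ hTrefl hTanti hRT hTS with h1 | h1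
  · exfalso
    have h2 : (a, b) ∈ R \ {(a, b)} := h1.symm ▸ hmem
    exact h2.2 rfl
  · exact h1.symm

lemma cover_dec_case {R S : Set (Fin n × Fin n)}
    (hR : IsReflRel R) (haR : IsAntisymRel R)
    (h : CoversAS R S) {a b : Fin n} (hab : a < b)
    (h1 : (b, a) ∈ S) (h2 : (b, a) ∉ R) (h3 : (a, b) ∉ R) : S = R ∪ {(b, a)} := by
  obtain ⟨⟨hIS, hDR⟩, hne, hmin⟩ := h
  have hTrefl : IsReflRel (R ∪ {(b, a)}) := fun c => Or.inl (hR c)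
  have hTanti : IsAntisymRel (R ∪ {(b, a)}) := by
    rintro u v (hu | hu) (hv | hv)
    · exact haR u v hu hv
    · simp only [Set.mem_singleton_iff, Prod.mk.injEq] at hv
      obtain ⟨rfl, rfl⟩ := hv
      exact absurd hu h3
    · simp only [Set.mem_singleton_iff, Prod.mk.injEq] at hu
      obtain ⟨rfl, rfl⟩ := hu
      exact absurd hv h3
    · simp only [Set.mem_singleton_iff, Prod.mk.injEq] at hu hv
      obtain ⟨rfl, rfl⟩ := hu
      exact hv.1.symm
  have hRT : WOLE R (R ∪ {(b, a)}) := by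
    constructor
    · rintro p ⟨hp | hp, hle⟩
      · exact ⟨hp, hle⟩
      · simp only [Set.mem_singleton_iff] at hp
        subst hp
        exact absurd hle (not_le.mpr hab)
    · intro p hp; exact ⟨Or.inl hp.1, hp.2⟩
  have hTS : WOLE (R ∪ {(b, a)}) S := by
    constructor
    · intro p hp
      have h4 := hIS hp
      exact ⟨Or.inl h4.1, h4.2⟩
    · rintro p ⟨hp | hp, hle⟩
      · exact hDR ⟨hp, hle⟩
      · simp only [Set.mem_singleton_iff] at hp
        subst hp
        exact ⟨h1, le_of_lt hab⟩
  rcases hmin _ hTrefl hTanti hRT hTS with h4 | h4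
  · exfalso
    exact h2 (h4 ▸ (Or.inr rfl : (b, a) ∈ R ∪ {(b, a)}))
  · exact h4.symm

end Aux


/-- Characterization of the cover relations in the weak order on reflexive
antisymmetric relations. -/
theorem covers_antisym_characterization (n : ℕ) (R S : Set (Fin n × Fin n))
    (hR : IsReflRel R) (haR : IsAntisymRel R)
    (hS : IsReflRel S) (haS : IsAntisymRel S) :
    CoversAS R S ↔
      ((∃ a b : Fin n, a < b ∧ (a, b) ∈ R ∧ S = R \ {(a, b)}) ∨
       (∃ a b : Fin n, a < b ∧ (a, b) ∉ R ∧ (b, a) ∉ R ∧ S = R ∪ {(b, a)})) := by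
  constructor
  · intro h
    obtain ⟨⟨hIS, hDR⟩, hne, hmin⟩ := id h
    have hex : ∃ p : Fin n × Fin n, ¬ (p ∈ R ↔ p ∈ S) := by
      by_contra hc
      push_neg at hc
      exact hne (Set.ext hc)
    obtain ⟨⟨x, y⟩, hp⟩ := hex
    rw [not_iff] at hp
    by_cases hxR : (x, y) ∈ R
    · -- (x,y) ∈ R, (x,y) ∉ S
      have hxS : (x, y) ∉ S := fun hs => (hp.mpr hs) hxR
      rcases le_total y x with hle | hle
      · exact absurd (hDR ⟨hxR, hle⟩).1 hxS
      · have hlt : x < y := lt_of_le_of_ne hle (by rintro rfl; exact hxS (hS x))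
        exact Or.inl ⟨x, y, hlt, hxR, cover_inc_case hR haR h hlt hxR hxS⟩
    · -- (x,y) ∈ S, (x,y) ∉ R
      have hxS : (x, y) ∈ S := hp.mp hxR
      rcases le_total x y with hle | hle
      · exact absurd (hIS ⟨hxS, hle⟩).1 hxR
      · have hlt : y < x := lt_of_le_of_ne hle (by rintro rfl; exact hxR (hR _))
        have h3 : (y, x) ∉ R := by
          intro hyx
          have h4 : (y, x) ∉ S := fun hs => absurd (haS y x hs hxS) (ne_of_lt hlt)
          have h5 := cover_inc_case hR haR h hlt hyx h4
          rw [h5] at hxS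
          exact hxR hxS.1
        exact Or.inr ⟨y, x, hlt, h3, hxR, cover_dec_case hR haR h hlt hxS hxR h3⟩
  · rintro (⟨a, b, hab, hmem, rfl⟩ | ⟨a, b, hab, h1, h2, rfl⟩)
    · -- S = R \ {(a,b)}
      refine ⟨⟨fun p hp => ⟨hp.1.1, hp.2⟩, fun p hp => ⟨⟨hp.1, ?_⟩, hp.2⟩⟩, ?_, ?_⟩
      · simp only [Set.mem_singleton_iff]
        rintro rfl
        exact absurd hp.2 (not_le.mpr hab)
      · intro he
        have : (a, b) ∈ R \ {(a, b)} := he ▸ hmem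
        exact this.2 rfl
      · rintro T hTr hTa ⟨hIT, hDT⟩ ⟨hIS2, hDS2⟩
        by_cases hm : (a, b) ∈ T
        · left
          apply Set.ext
          rintro ⟨x, y⟩
          constructor
          · intro hx
            rcases le_total x y with hle | hle
            · exact (hIT ⟨hx, hle⟩).1
            · exact (hDS2 ⟨hx, hle⟩).1.1
          · intro hx
            rcases le_total x y with hle | hle
            · by_cases he : ((x, y) : Fin n × Fin n) = (a, b)
              · rw [he]; exact hm
              · exact (hIS2 ⟨⟨hx, he⟩, hle⟩).1
            · exact (hDT ⟨hx, hle⟩).1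
        · right
          apply Set.ext
          rintro ⟨x, y⟩
          constructor
          · intro hx
            rcases le_total x y with hle | hle
            · refine ⟨(hIT ⟨hx, hle⟩).1, ?_⟩
              simp only [Set.mem_singleton_iff]
              intro he
              rw [he] at hx
              exact hm hx
            · exact (hDS2 ⟨hx, hle⟩).1
          · rintro ⟨hx, hxne⟩
            rcases le_total x y with hle | hle
            · exact (hIS2 ⟨⟨hx, hxne⟩, hle⟩).1
            · exact (hDT ⟨hx, hle⟩).1
    · -- S = R ∪ {(b,a)}
      refine ⟨⟨?_, fun p hp => ⟨Or.inl hp.1, hp.2⟩⟩, ?_, ?_⟩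
      · rintro p ⟨hp | hp, hle⟩
        · exact ⟨hp, hle⟩
        · simp only [Set.mem_singleton_iff] at hp
          subst hp
          exact absurd hle (not_le.mpr hab)
      · intro he
        exact h2 (he ▸ (Or.inr rfl : (b, a) ∈ R ∪ {(b, a)}))
      · rintro T hTr hTa ⟨hIT, hDT⟩ ⟨hIS2, hDS2⟩
        by_cases hm : (b, a) ∈ T
        · right
          apply Set.ext
          rintro ⟨x, y⟩
          constructor
          · intro hx
            rcases le_total x y with hle | hle
            · exact Or.inl (hIT ⟨hx, hle⟩).1
            · exact (hDS2 ⟨hx, hle⟩).1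
          · rintro (hx | hx)
            · rcases le_total x y with hle | hle
              · exact (hIS2 ⟨Or.inl hx, hle⟩).1
              · exact (hDT ⟨hx, hle⟩).1
            · simp only [Set.mem_singleton_iff] at hx
              rw [hx]; exact hm
        · left
          apply Set.ext
          rintro ⟨x, y⟩
          constructor
          · intro hx
            rcases le_total x y with hle | hle
            · exact (hIT ⟨hx, hle⟩).1
            · rcases (hDS2 ⟨hx, hle⟩).1 with h4 | h4
              · exact h4
              · simp only [Set.mem_singleton_iff] at h4
                exact absurd (h4 ▸ hx) hm
          · intro hx
            rcases le_total x y with hle | hle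
            · exact (hIS2 ⟨Or.inl hx, hle⟩).1
            · exact (hDT ⟨hx, hle⟩).1
end

section
/- The weak order on semitransitive reflexive relations on [n] is a lattice, with meet of R and S given by tc(Inc(R) ∪ Inc(S)) ∪ (Dec(R) ∩ Dec(S)) and join given by (Inc(R) ∩ Inc(S)) ∪ tc(Dec(R) ∪ Dec(S)), where tc denotes transitive closure. -/
/-- Transitive closure of a relation. -/
def tcR {n : ℕ} (R : Set (Fin n × Fin n)) : Set (Fin n × Fin n) :=
  {p | Relation.TransGen (fun u v : Fin n => (u, v) ∈ R) p.1 p.2}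

/-- A relation is semitransitive when both its increasing and decreasing parts
are transitive. -/
def IsSemiTransRel {n : ℕ} (R : Set (Fin n × Fin n)) : Prop :=
  IsTransRel (IncR R) ∧ IsTransRel (DecR R)

/-- Meet in the weak order on semitransitive relations. -/
def meetST {n : ℕ} (R S : Set (Fin n × Fin n)) : Set (Fin n × Fin n) :=
  tcR (IncR R ∪ IncR S) ∪ (DecR R ∩ DecR S)

/-- Join in the weak order on semitransitive relations. -/
def joinST {n : ℕ} (R S : Set (Fin n × Fin n)) : Set (Fin n × Fin n) :=
  (IncR R ∩ IncR S) ∪ tcR (DecR R ∪ DecR S)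


section Aux
variable {n : ℕ}

lemma tcR_subset' {A B : Set (Fin n × Fin n)} (hAB : A ⊆ B) (hB : IsTransRel B) :
    tcR A ⊆ B := by
  rintro ⟨a, b⟩ hp
  simp only [tcR, Set.mem_setOf_eq] at hp
  induction hp with
  | single h => exact hAB h
  | tail _ h ih => exact hB _ _ _ ih (hAB h)

lemma subset_tcR' {A : Set (Fin n × Fin n)} : A ⊆ tcR A :=
  fun _ hp => Relation.TransGen.single hp

lemma tcR_trans' (A : Set (Fin n × Fin n)) : IsTransRel (tcR A) :=
  fun _ _ _ h1 h2 => Relation.TransGen.trans h1 h2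

lemma tcR_le' {A : Set (Fin n × Fin n)} (h : ∀ p ∈ A, p.1 ≤ p.2) :
    ∀ p ∈ tcR A, p.1 ≤ p.2 :=
  fun p hp => tcR_subset' (B := {q | q.1 ≤ q.2}) (fun q hq => h q hq)
    (fun u v w h1 h2 => show u ≤ w from le_trans (show u ≤ v from h1) (show v ≤ w from h2)) hp

lemma tcR_ge' {A : Set (Fin n × Fin n)} (h : ∀ p ∈ A, p.2 ≤ p.1) :
    ∀ p ∈ tcR A, p.2 ≤ p.1 :=
  fun p hp => tcR_subset' (B := {q | q.2 ≤ q.1}) (fun q hq => h q hq)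
    (fun u v w h1 h2 => show w ≤ u from le_trans (show w ≤ v from h2) (show v ≤ u from h1)) hp

lemma incR_meet' (R S : Set (Fin n × Fin n)) (hR : IsReflRel R) :
    IncR (meetST R S) = tcR (IncR R ∪ IncR S) := by
  ext ⟨a, b⟩
  constructor
  · rintro ⟨hmem, hab⟩
    rcases hmem with h | h
    · exact h
    · have : a = b := le_antisymm hab h.1.2
      subst this
      exact Relation.TransGen.single (Or.inl ⟨hR a, le_refl a⟩)
  · intro h
    exact ⟨Or.inl h, tcR_le' (fun p hp => hp.elim (fun h => h.2) (fun h => h.2)) _ h⟩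

lemma decR_meet' (R S : Set (Fin n × Fin n)) (hR : IsReflRel R) (hS : IsReflRel S) :
    DecR (meetST R S) = DecR R ∩ DecR S := by
  ext ⟨a, b⟩
  constructor
  · rintro ⟨hmem, hba⟩
    rcases hmem with h | h
    · have hab : a ≤ b := tcR_le' (fun p hp => hp.elim (fun h => h.2) (fun h => h.2)) _ h
      have : a = b := le_antisymm hab hba
      subst this
      exact ⟨⟨hR a, le_refl a⟩, ⟨hS a, le_refl a⟩⟩
    · exact h
  · rintro ⟨h1, h2⟩
    exact ⟨Or.inr ⟨h1, h2⟩, h1.2⟩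

lemma incR_join' (R S : Set (Fin n × Fin n)) (hR : IsReflRel R) (hS : IsReflRel S) :
    IncR (joinST R S) = IncR R ∩ IncR S := by
  ext ⟨a, b⟩
  constructor
  · rintro ⟨hmem, hab⟩
    rcases hmem with h | h
    · exact h
    · have hba : b ≤ a := tcR_ge' (fun p hp => hp.elim (fun h => h.2) (fun h => h.2)) _ h
      have : a = b := le_antisymm hab hba
      subst this
      exact ⟨⟨hR a, le_refl a⟩, ⟨hS a, le_refl a⟩⟩
  · rintro ⟨h1, h2⟩
    exact ⟨Or.inl ⟨h1, h2⟩, h1.2⟩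

lemma decR_join' (R S : Set (Fin n × Fin n)) (hR : IsReflRel R) :
    DecR (joinST R S) = tcR (DecR R ∪ DecR S) := by
  ext ⟨a, b⟩
  constructor
  · rintro ⟨hmem, hba⟩
    rcases hmem with h | h
    · have : a = b := le_antisymm h.1.2 hba
      subst this
      exact Relation.TransGen.single (Or.inl ⟨hR a, le_refl a⟩)
    · exact h
  · intro h
    exact ⟨Or.inr h, tcR_ge' (fun p hp => hp.elim (fun h => h.2) (fun h => h.2)) _ h⟩

end Aux

/-- The weak order on semitransitive reflexive relations is a lattice with the
stated meet and join. -/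
theorem weakOrder_semitransitive_lattice (n : ℕ) (R S : Set (Fin n × Fin n))
    (hR : IsReflRel R) (hsR : IsSemiTransRel R)
    (hS : IsReflRel S) (hsS : IsSemiTransRel S) :
    (IsReflRel (meetST R S) ∧ IsSemiTransRel (meetST R S) ∧
      WOLE (meetST R S) R ∧ WOLE (meetST R S) S ∧
      (∀ T : Set (Fin n × Fin n), IsReflRel T → IsSemiTransRel T →
        WOLE T R → WOLE T S → WOLE T (meetST R S))) ∧
    (IsReflRel (joinST R S) ∧ IsSemiTransRel (joinST R S) ∧
      WOLE R (joinST R S) ∧ WOLE S (joinST R S) ∧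
      (∀ T : Set (Fin n × Fin n), IsReflRel T → IsSemiTransRel T →
        WOLE R T → WOLE S T → WOLE (joinST R S) T)) := by
  
  constructor
  · refine ⟨fun a => Or.inr ⟨⟨hR a, le_refl a⟩, ⟨hS a, le_refl a⟩⟩, ?_, ?_, ?_, ?_⟩
    · constructor
      · rw [incR_meet' R S hR]
        exact tcR_trans' _
      · rw [decR_meet' R S hR hS]
        exact fun u v w h1 h2 => ⟨hsR.2 u v w h1.1 h2.1, hsS.2 u v w h1.2 h2.2⟩
    · constructor
      · rw [incR_meet' R S hR]
        exact fun p hp => subset_tcR' (Or.inl hp)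
      · rw [decR_meet' R S hR hS]
        exact Set.inter_subset_left
    · constructor
      · rw [incR_meet' R S hR]
        exact fun p hp => subset_tcR' (Or.inr hp)
      · rw [decR_meet' R S hR hS]
        exact Set.inter_subset_right
    · intro T hT hsT hTR hTS
      constructor
      · rw [incR_meet' R S hR]
        exact tcR_subset' (Set.union_subset hTR.1 hTS.1) hsT.1
      · rw [decR_meet' R S hR hS]
        exact Set.subset_inter hTR.2 hTS.2
  · refine ⟨fun a => Or.inl ⟨⟨hR a, le_refl a⟩, ⟨hS a, le_refl a⟩⟩, ?_, ?_, ?_, ?_⟩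
    · constructor
      · rw [incR_join' R S hR hS]
        exact fun u v w h1 h2 => ⟨hsR.1 u v w h1.1 h2.1, hsS.1 u v w h1.2 h2.2⟩
      · rw [decR_join' R S hR]
        exact tcR_trans' _
    · constructor
      · rw [incR_join' R S hR hS]
        exact Set.inter_subset_left
      · rw [decR_join' R S hR]
        exact fun p hp => subset_tcR' (Or.inl hp)
    · constructor
      · rw [incR_join' R S hR hS]
        exact Set.inter_subset_right
      · rw [decR_join' R S hR]
        exact fun p hp => subset_tcR' (Or.inr hp)
    · intro T hT hsT hRT hST
      constructor
      · rw [incR_join' R S hR hS]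
        exact Set.subset_inter hRT.1 hST.1
      · rw [decR_join' R S hR]
        exact tcR_subset' (Set.union_subset hRT.2 hST.2) hsT.2
end

section
/- If R is a semitransitive reflexive relation on [n], then its transitive decreasing deletion tdd(R) is a transitive relation. -/
/-- The transitive decreasing deletion. -/
def tddR {n : ℕ} (R : Set (Fin n × Fin n)) : Set (Fin n × Fin n) :=
  R \ {p | p.2 ≤ p.1 ∧ ∃ i j : Fin n, i ≤ p.1 ∧ p.2 ≤ j ∧
    (i, p.1) ∈ R ∧ (p.1, p.2) ∈ R ∧ (p.2, j) ∈ R ∧ (i, j) ∉ R}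

/-- Membership in `tddR` gives membership in `R`. -/
lemma tdd_sub {n : ℕ} {R : Set (Fin n × Fin n)} {u v : Fin n}
    (h : (u, v) ∈ tddR R) : (u, v) ∈ R := h.1

/-- The defining property of surviving decreasing pairs. -/
lemma tdd_prop {n : ℕ} {R : Set (Fin n × Fin n)} {u v : Fin n}
    (h : (u, v) ∈ tddR R) (hvu : v ≤ u) :
    ∀ i j : Fin n, i ≤ u → v ≤ j → (i, u) ∈ R → (v, j) ∈ R → (i, j) ∈ R := by
  intro i j hiu hvj hiRu hvRj
  by_contra hnij
  exact h.2 ⟨hvu, i, j, hiu, hvj, hiRu, h.1, hvRj, hnij⟩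

/-- Constructor for membership in `tddR`. -/
lemma tdd_mem {n : ℕ} {R : Set (Fin n × Fin n)} {u w : Fin n}
    (hRuw : (u, w) ∈ R)
    (hforall : ∀ i j : Fin n, i ≤ u → w ≤ j → (i, u) ∈ R → (w, j) ∈ R → (i, j) ∈ R) :
    (u, w) ∈ tddR R := by
  refine ⟨hRuw, ?_⟩
  rintro ⟨hwu, i, j, hiu, hwj, hiRu, _, hwRj, hnij⟩
  exact hnij (hforall i j hiu hwj hiRu hwRj)

/-- The transitive decreasing deletion of a semitransitive reflexive relation is
transitive. -/
theorem tdd_transitive (n : ℕ) (R : Set (Fin n × Fin n))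
    (hR : IsReflRel R) (hs : IsSemiTransRel R) :
    IsTransRel (tddR R) := by
  obtain ⟨hInc, hDec⟩ := hs
  intro u v w huv hvw
  have hRuv : (u, v) ∈ R := huv.1
  have hRvw : (v, w) ∈ R := hvw.1
  rcases le_or_gt u v with h1 | h1
  · rcases le_or_gt v w with h2 | h2
    · -- increasing / increasing
      have hRuw : (u, w) ∈ R := (hInc u v w ⟨hRuv, h1⟩ ⟨hRvw, h2⟩).1
      refine tdd_mem hRuw ?_
      intro i j hiu hwj hiRu hwRj
      -- then u ≤ v ≤ w ≤ j and i ≤ u, all increasing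
      have hiRv : (i, v) ∈ R := (hInc i u v ⟨hiRu, hiu⟩ ⟨hRuv, h1⟩).1
      have hiRw : (i, w) ∈ R := (hInc i v w ⟨hiRv, hiu.trans h1⟩ ⟨hRvw, h2⟩).1
      exact (hInc i w j ⟨hiRw, (hiu.trans h1).trans h2⟩ ⟨hwRj, hwj⟩).1
    · -- increasing then decreasing: use property of (v,w)
      have hp := tdd_prop hvw h2.le
      have hRuw : (u, w) ∈ R := hp u w h1 le_rfl hRuv (hR w)
      refine tdd_mem hRuw ?_
      intro i j hiu hwj hiRu hwRj
      have hiRv : (i, v) ∈ R := (hInc i u v ⟨hiRu, hiu⟩ ⟨hRuv, h1⟩).1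
      exact hp i j (hiu.trans h1) hwj hiRv hwRj
  · rcases le_or_gt v w with h2 | h2
    · -- decreasing then increasing: use property of (u,v)
      have hp := tdd_prop huv h1.le
      have hRuw : (u, w) ∈ R := hp u w le_rfl h2 (hR u) hRvw
      refine tdd_mem hRuw ?_
      intro i j hiu hwj hiRu hwRj
      have hvRj : (v, j) ∈ R := (hInc v w j ⟨hRvw, h2⟩ ⟨hwRj, hwj⟩).1
      exact hp i j hiu (h2.trans hwj) hiRu hvRj
    · -- decreasing / decreasing
      have hp1 := tdd_prop huv h1.le
      have hp2 := tdd_prop hvw h2.le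
      have hRuw : (u, w) ∈ R := (hDec u v w ⟨hRuv, h1.le⟩ ⟨hRvw, h2.le⟩).1
      refine tdd_mem hRuw ?_
      intro i j hiu hwj hiRu hwRj
      have hiRv : (i, v) ∈ R := hp1 i v hiu le_rfl hiRu (hR v)
      have hvRj : (v, j) ∈ R := hp2 v j le_rfl hwj (hR v) hwRj
      rcases le_or_gt v j with h3 | h3
      · exact hp1 i j hiu h3 hiRu hvRj
      · rcases le_or_gt i v with h4 | h4
        · exact hp2 i j h4 hwj hiRv hwRj
        · exact (hDec i v j ⟨hiRv, h4.le⟩ ⟨hvRj, h3.le⟩).1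
end

section
/- The weak order on transitive reflexive relations on [n] is a lattice, with meet of R and S given by tdd(tc(Inc(R) ∪ Inc(S)) ∪ (Dec(R) ∩ Dec(S))) and join given by tid((Inc(R) ∩ Inc(S)) ∪ tc(Dec(R) ∪ Dec(S))). -/
/-- The transitive increasing deletion. -/
def tidR {n : ℕ} (R : Set (Fin n × Fin n)) : Set (Fin n × Fin n) :=
  R \ {p | p.1 ≤ p.2 ∧ ∃ i j : Fin n, p.1 ≤ i ∧ j ≤ p.2 ∧
    (i, p.1) ∈ R ∧ (p.1, p.2) ∈ R ∧ (p.2, j) ∈ R ∧ (i, j) ∉ R}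

/-- Meet in the weak order on transitive relations. -/
def meetT {n : ℕ} (R S : Set (Fin n × Fin n)) : Set (Fin n × Fin n) :=
  tddR (tcR (IncR R ∪ IncR S) ∪ (DecR R ∩ DecR S))

/-- Join in the weak order on transitive relations. -/
def joinT {n : ℕ} (R S : Set (Fin n × Fin n)) : Set (Fin n × Fin n) :=
  tidR ((IncR R ∩ IncR S) ∪ tcR (DecR R ∪ DecR S))

open Relation

namespace WOAux

variable {n : ℕ}

/-- The step relation generating the increasing part of the meet. -/
def St (R S : Set (Fin n × Fin n)) (u v : Fin n) : Prop := (u, v) ∈ IncR R ∪ IncR S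

/-- The candidate meet relation before deletion. -/
def Mp (R S : Set (Fin n × Fin n)) : Set (Fin n × Fin n) :=
  tcR (IncR R ∪ IncR S) ∪ (DecR R ∩ DecR S)

lemma meetT_eq (R S : Set (Fin n × Fin n)) : meetT R S = tddR (Mp R S) := rfl

lemma mem_tc_iff {R S : Set (Fin n × Fin n)} {a b : Fin n} :
    (a, b) ∈ tcR (IncR R ∪ IncR S) ↔ TransGen (St R S) a b := Iff.rfl

lemma St.le {R S : Set (Fin n × Fin n)} {a b : Fin n} (h : St R S a b) : a ≤ b := by
  rcases h with h | h
  · exact h.2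
  · exact h.2

lemma tc_le {R S : Set (Fin n × Fin n)} {a b : Fin n}
    (h : TransGen (St R S) a b) : a ≤ b := by
  induction h with
  | single h => exact h.le
  | tail _ h ih => exact le_trans ih h.le

lemma mem_Mp_inc {R S : Set (Fin n × Fin n)} {a b : Fin n}
    (h : (a, b) ∈ Mp R S) (hab : a ≤ b) : TransGen (St R S) a b := by
  rcases h with h | h
  · exact h
  · have : b ≤ a := h.1.2
    have hba : a = b := le_antisymm hab this
    subst hba
    exact TransGen.single (Or.inl ⟨h.1.1, le_refl a⟩)

lemma mem_Mp_dec {R S : Set (Fin n × Fin n)} (hR : IsReflRel R) (hS : IsReflRel S)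
    {a b : Fin n} (h : (a, b) ∈ Mp R S) (hab : b ≤ a) :
    (a, b) ∈ DecR R ∩ DecR S := by
  rcases h with h | h
  · have : a ≤ b := tc_le h
    have hba : a = b := le_antisymm this hab
    subst hba
    exact ⟨⟨hR a, le_refl a⟩, ⟨hS a, le_refl a⟩⟩
  · exact h

lemma Mp_refl {R S : Set (Fin n × Fin n)} (hR : IsReflRel R) (hS : IsReflRel S)
    (a : Fin n) : (a, a) ∈ Mp R S :=
  Or.inr ⟨⟨hR a, le_refl a⟩, ⟨hS a, le_refl a⟩⟩


section Crossing

variable {R S T : Set (Fin n × Fin n)}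

/-- Steps are in `T` when `T` is below `R` and `S`. -/
lemma St.mem_T (hTR : IncR R ⊆ IncR T) (hTS : IncR S ⊆ IncR T)
    {a b : Fin n} (h : St R S a b) : (a, b) ∈ T := by
  rcases h with h | h
  · exact (hTR h).1
  · exact (hTS h).1

lemma tc_mem_T (htT : IsTransRel T) (hTR : IncR R ⊆ IncR T) (hTS : IncR S ⊆ IncR T)
    {a b : Fin n} (h : TransGen (St R S) a b) : (a, b) ∈ T := by
  induction h with
  | single h => exact h.mem_T hTR hTS
  | tail _ h ih => exact htT _ _ _ ih (h.mem_T hTR hTS)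

lemma crossing₀ (hR : IsReflRel R) (htR : IsTransRel R) (htS : IsTransRel S)
    (htT : IsTransRel T) (hTR : IncR R ⊆ IncR T) (hTS : IncR S ⊆ IncR T)
    (hDR : DecR T ⊆ DecR R) (hDS : DecR T ⊆ DecR S)
    {a j : Fin n} (h : ReflTransGen (St R S) a j) :
    ∀ i : Fin n, (i, a) ∈ T → a ≤ i → i ≤ j → TransGen (St R S) i j := by
  induction h using ReflTransGen.head_induction_on with
  | refl =>
    intro i hT hle hij
    have : i = j := le_antisymm hij hle
    subst this
    exact TransGen.single (Or.inl ⟨hR i, le_refl i⟩)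
  | head hac hcj IH =>
    rename_i a c
    intro i hiaT hai hij
    have hiaR : (i, a) ∈ R := (hDR ⟨hiaT, hai⟩).1
    have hiaS : (i, a) ∈ S := (hDS ⟨hiaT, hai⟩).1
    have hacT : (a, c) ∈ T := hac.mem_T hTR hTS
    have hicT : (i, c) ∈ T := htT _ _ _ hiaT hacT
    rcases hac with ⟨hacR, _⟩ | ⟨hacS, _⟩
    · have hicR : (i, c) ∈ R := htR _ _ _ hiaR hacR
      rcases le_total i c with h1 | h1
      · exact TransGen.head' (Or.inl ⟨hicR, h1⟩) hcj
      · exact IH i hicT h1 hij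
    · have hicS : (i, c) ∈ S := htS _ _ _ hiaS hacS
      rcases le_total i c with h1 | h1
      · exact TransGen.head' (Or.inr ⟨hicS, h1⟩) hcj
      · exact IH i hicT h1 hij

lemma crossing₁ (hR : IsReflRel R) (htR : IsTransRel R) (htS : IsTransRel S)
    (htT : IsTransRel T) (hTR : IncR R ⊆ IncR T) (hTS : IncR S ⊆ IncR T)
    (hDR : DecR T ⊆ DecR R) (hDS : DecR T ⊆ DecR S)
    {i b : Fin n} (h : ReflTransGen (St R S) i b) :
    ∀ a j : Fin n, (b, a) ∈ T → a ≤ b → ReflTransGen (St R S) a j → i ≤ j →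
      TransGen (St R S) i j := by
  induction h with
  | refl =>
    intro a j hT hab haj hij
    exact crossing₀ hR htR htS htT hTR hTS hDR hDS haj i hT hab hij
  | tail hix hxb IH =>
    rename_i x b
    intro a j hbaT hab haj hij
    have hbaR : (b, a) ∈ R := (hDR ⟨hbaT, hab⟩).1
    have hbaS : (b, a) ∈ S := (hDS ⟨hbaT, hab⟩).1
    have hxbT : (x, b) ∈ T := hxb.mem_T hTR hTS
    have hxaT : (x, a) ∈ T := htT _ _ _ hxbT hbaT
    rcases hxb with ⟨hxbR, _⟩ | ⟨hxbS, _⟩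
    · have hxaR : (x, a) ∈ R := htR _ _ _ hxbR hbaR
      rcases le_total x a with h1 | h1
      · exact TransGen.trans_right hix (TransGen.head' (Or.inl ⟨hxaR, h1⟩) haj)
      · exact IH a j hxaT h1 haj hij
    · have hxaS : (x, a) ∈ S := htS _ _ _ hxbS hbaS
      rcases le_total x a with h1 | h1
      · exact TransGen.trans_right hix (TransGen.head' (Or.inr ⟨hxaS, h1⟩) haj)
      · exact IH a j hxaT h1 haj hij

end Crossing


section Meet

variable {R S : Set (Fin n × Fin n)}

lemma mem_meetT_iff {a b : Fin n} :
    (a, b) ∈ meetT R S ↔ (a, b) ∈ Mp R S ∧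
      ¬(b ≤ a ∧ ∃ i j : Fin n, i ≤ a ∧ b ≤ j ∧ (i, a) ∈ Mp R S ∧ (a, b) ∈ Mp R S ∧
        (b, j) ∈ Mp R S ∧ (i, j) ∉ Mp R S) := Iff.rfl

/-- Increasing pairs are never deleted. -/
lemma noDelInc {a b : Fin n} (h : (a, b) ∈ Mp R S) (hab : a ≤ b) :
    (a, b) ∈ meetT R S := by
  refine mem_meetT_iff.2 ⟨h, ?_⟩
  rintro ⟨hba, i, j, hia, hbj, h1, _, h3, h4⟩
  have hab' : a = b := le_antisymm hab hba
  subst hab'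
  have hU1 : TransGen (St R S) i a := mem_Mp_inc h1 hia
  have hU2 : TransGen (St R S) a j := mem_Mp_inc h3 hbj
  exact h4 (Or.inl (hU1.trans hU2))

/-- Non-deletion extraction. -/
lemma nd {x y : Fin n} (h : (x, y) ∈ meetT R S) (hyx : y ≤ x) {i j : Fin n}
    (hix : i ≤ x) (hyj : y ≤ j) (h1 : (i, x) ∈ Mp R S) (h2 : (y, j) ∈ Mp R S) :
    (i, j) ∈ Mp R S := by
  by_contra h4
  exact (mem_meetT_iff.1 h).2 ⟨hyx, i, j, hix, hyj, h1, (mem_meetT_iff.1 h).1, h2, h4⟩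

lemma meet_mem_Mp {a b : Fin n} (h : (a, b) ∈ meetT R S) : (a, b) ∈ Mp R S :=
  (mem_meetT_iff.1 h).1

lemma meet_refl (hR : IsReflRel R) (hS : IsReflRel S) : IsReflRel (meetT R S) :=
  fun a => noDelInc (Mp_refl hR hS a) (le_refl a)

lemma meet_trans (hR : IsReflRel R) (htR : IsTransRel R)
    (hS : IsReflRel S) (htS : IsTransRel S) : IsTransRel (meetT R S) := by
  intro u v w h1 h2
  have m1 : (u, v) ∈ Mp R S := meet_mem_Mp h1
  have m2 : (v, w) ∈ Mp R S := meet_mem_Mp h2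
  have hDtrans : ∀ a b c : Fin n, (a, b) ∈ DecR R ∩ DecR S → (b, c) ∈ DecR R ∩ DecR S →
      (a, c) ∈ DecR R ∩ DecR S := by
    rintro a b c ⟨⟨hab1, hab2⟩, ⟨hab3, _⟩⟩ ⟨⟨hbc1, hbc2⟩, ⟨hbc3, _⟩⟩
    exact ⟨⟨htR _ _ _ hab1 hbc1, le_trans hbc2 hab2⟩, ⟨htS _ _ _ hab3 hbc3, le_trans hbc2 hab2⟩⟩
  rcases le_total u v with huv | hvu
  · rcases le_total v w with hvw | hwv
    · -- both increasing
      have hU : TransGen (St R S) u w :=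
        (mem_Mp_inc m1 huv).trans (mem_Mp_inc m2 hvw)
      exact noDelInc (Or.inl hU) (le_trans huv hvw)
    · -- u ≤ v, w ≤ v
      have huw : (u, w) ∈ Mp R S :=
        nd h2 hwv huv (le_refl w) m1 (Mp_refl hR hS w)
      rcases le_total u w with h3 | h3
      · exact noDelInc huw h3
      · refine mem_meetT_iff.2 ⟨huw, ?_⟩
        rintro ⟨hwu, i, j, hiu, hwj, hx1, _, hx3, hx4⟩
        have hiv : (i, v) ∈ Mp R S :=
          Or.inl ((mem_Mp_inc hx1 hiu).trans (mem_Mp_inc m1 huv))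
        exact hx4 (nd h2 hwv (le_trans hiu huv) hwj hiv hx3)
  · rcases le_total v w with hvw | hwv
    · -- v ≤ u, v ≤ w
      have huw : (u, w) ∈ Mp R S :=
        nd h1 hvu (le_refl u) hvw (Mp_refl hR hS u) m2
      rcases le_total u w with h3 | h3
      · exact noDelInc huw h3
      · refine mem_meetT_iff.2 ⟨huw, ?_⟩
        rintro ⟨hwu, i, j, hiu, hwj, hx1, _, hx3, hx4⟩
        have hvj : (v, j) ∈ Mp R S :=
          Or.inl ((mem_Mp_inc m2 hvw).trans (mem_Mp_inc hx3 hwj))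
        exact hx4 (nd h1 hvu hiu (le_trans hvw hwj) hx1 hvj)
    · -- both decreasing
      have huw : (u, w) ∈ Mp R S :=
        Or.inr (hDtrans u v w (mem_Mp_dec hR hS m1 hvu) (mem_Mp_dec hR hS m2 hwv))
      refine mem_meetT_iff.2 ⟨huw, ?_⟩
      rintro ⟨hwu, i, j, hiu, hwj, hx1, _, hx3, hx4⟩
      have hiv : (i, v) ∈ Mp R S := nd h1 hvu hiu (le_refl v) hx1 (Mp_refl hR hS v)
      have hvj : (v, j) ∈ Mp R S := nd h2 hwv (le_refl v) hwj (Mp_refl hR hS v) hx3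
      rcases le_total i v with h5 | h5
      · exact hx4 (nd h2 hwv h5 hwj hiv hx3)
      · rcases le_total v j with h6 | h6
        · exact hx4 (nd h1 hvu hiu h6 hx1 hvj)
        · exact hx4 (Or.inr (hDtrans i v j (mem_Mp_dec hR hS hiv h5) (mem_Mp_dec hR hS hvj h6)))

lemma meet_le_left (hR : IsReflRel R) (hS : IsReflRel S) : WOLE (meetT R S) R := by
  constructor
  · rintro ⟨a, b⟩ ⟨hab, hle⟩
    exact ⟨noDelInc (Or.inl (TransGen.single (Or.inl ⟨hab, hle⟩))) hle, hle⟩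
  · rintro ⟨a, b⟩ ⟨hm, hle⟩
    exact ⟨(mem_Mp_dec hR hS (meet_mem_Mp hm) hle).1.1, hle⟩

lemma meet_le_right (hR : IsReflRel R) (hS : IsReflRel S) : WOLE (meetT R S) S := by
  constructor
  · rintro ⟨a, b⟩ ⟨hab, hle⟩
    exact ⟨noDelInc (Or.inl (TransGen.single (Or.inr ⟨hab, hle⟩))) hle, hle⟩
  · rintro ⟨a, b⟩ ⟨hm, hle⟩
    exact ⟨(mem_Mp_dec hR hS (meet_mem_Mp hm) hle).2.1, hle⟩

lemma meet_glb (hR : IsReflRel R) (htR : IsTransRel R) (hS : IsReflRel S)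
    (htS : IsTransRel S) (T : Set (Fin n × Fin n)) (hT : IsReflRel T)
    (htT : IsTransRel T) (h1 : WOLE T R) (h2 : WOLE T S) : WOLE T (meetT R S) := by
  obtain ⟨hTRi, hTRd⟩ := h1
  obtain ⟨hTSi, hTSd⟩ := h2
  constructor
  · rintro ⟨a, b⟩ ⟨hm, hle⟩
    have hU : TransGen (St R S) a b := mem_Mp_inc (meet_mem_Mp hm) hle
    exact ⟨tc_mem_T htT hTRi hTSi hU, hle⟩
  · rintro ⟨b, a⟩ ⟨hbT, hle⟩
    refine ⟨mem_meetT_iff.2 ⟨Or.inr ⟨hTRd ⟨hbT, hle⟩, hTSd ⟨hbT, hle⟩⟩, ?_⟩, hle⟩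
    rintro ⟨hab, i, j, hib, haj, hx1, _, hx3, hx4⟩
    have hU1 : TransGen (St R S) i b := mem_Mp_inc hx1 hib
    have hU2 : TransGen (St R S) a j := mem_Mp_inc hx3 haj
    rcases le_total i j with h5 | h5
    · exact hx4 (Or.inl (crossing₁ hR htR htS htT hTRi hTSi hTRd hTSd
        hU1.to_reflTransGen a j hbT hab hU2.to_reflTransGen h5))
    · have hiT : (i, j) ∈ T := htT _ _ _ (htT _ _ _ (tc_mem_T htT hTRi hTSi hU1) hbT)
        (tc_mem_T htT hTRi hTSi hU2)
      exact hx4 (Or.inr ⟨hTRd ⟨hiT, h5⟩, hTSd ⟨hiT, h5⟩⟩)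

end Meet


section Swap

/-- Transposition of a relation. -/
def swapR (R : Set (Fin n × Fin n)) : Set (Fin n × Fin n) := {p | (p.2, p.1) ∈ R}

variable {R S : Set (Fin n × Fin n)}

lemma mem_swapR {a b : Fin n} : (a, b) ∈ swapR R ↔ (b, a) ∈ R := Iff.rfl

lemma swap_refl (h : IsReflRel R) : IsReflRel (swapR R) := fun a => h a

lemma swap_trans (h : IsTransRel R) : IsTransRel (swapR R) :=
  fun u v w h1 h2 => h w v u h2 h1

lemma Inc_swap : IncR (swapR R) = swapR (DecR R) := by
  ext ⟨a, b⟩; exact Iff.rfl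

lemma Dec_swap : DecR (swapR R) = swapR (IncR R) := by
  ext ⟨a, b⟩; exact Iff.rfl

lemma swap_union (A B : Set (Fin n × Fin n)) : swapR A ∪ swapR B = swapR (A ∪ B) := rfl

lemma swap_inter (A B : Set (Fin n × Fin n)) : swapR A ∩ swapR B = swapR (A ∩ B) := rfl

lemma tc_swap (A : Set (Fin n × Fin n)) : tcR (swapR A) = swapR (tcR A) := by
  ext ⟨a, b⟩
  exact Relation.transGen_swap (r := fun u v : Fin n => (u, v) ∈ A)

lemma tdd_swap (A : Set (Fin n × Fin n)) : tddR (swapR A) = swapR (tidR A) := by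
  ext ⟨a, b⟩
  constructor
  · rintro ⟨h1, h2⟩
    refine ⟨h1, ?_⟩
    rintro ⟨hba, i, j, h3, h4, h5, h6, h7, h8⟩
    exact h2 ⟨hba, j, i, h4, h3, h7, h6, h5, h8⟩
  · rintro ⟨h1, h2⟩
    refine ⟨h1, ?_⟩
    rintro ⟨hba, i, j, h3, h4, h5, h6, h7, h8⟩
    exact h2 ⟨hba, j, i, h4, h3, h7, h6, h5, h8⟩

lemma meet_swap : meetT (swapR R) (swapR S) = swapR (joinT R S) := by
  unfold meetT joinT
  rw [Inc_swap, Inc_swap, Dec_swap, Dec_swap, swap_union, swap_inter, tc_swap,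
    swap_union, tdd_swap]
  rw [Set.union_comm]

lemma swap_subset {A B : Set (Fin n × Fin n)} : swapR A ⊆ swapR B ↔ A ⊆ B := by
  constructor
  · intro h p hp
    exact h (a := (p.2, p.1)) hp
  · intro h p hp
    exact h hp

lemma swap_swap (A : Set (Fin n × Fin n)) : swapR (swapR A) = A := by
  ext ⟨a, b⟩; exact Iff.rfl

lemma WOLE_swap : WOLE (swapR R) (swapR S) ↔ WOLE S R := by
  unfold WOLE
  rw [Inc_swap, Inc_swap, Dec_swap, Dec_swap, swap_subset, swap_subset]
  exact and_comm

end Swap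

end WOAux


open WOAux in
/-- The weak order on transitive reflexive relations is a lattice, with the
stated meet and join. -/
theorem weakOrder_transitive_lattice (n : ℕ) (R S : Set (Fin n × Fin n))
    (hR : IsReflRel R) (htR : IsTransRel R)
    (hS : IsReflRel S) (htS : IsTransRel S) :
    (IsReflRel (meetT R S) ∧ IsTransRel (meetT R S) ∧
      WOLE (meetT R S) R ∧ WOLE (meetT R S) S ∧
      (∀ T : Set (Fin n × Fin n), IsReflRel T → IsTransRel T →
        WOLE T R → WOLE T S → WOLE T (meetT R S))) ∧
    (IsReflRel (joinT R S) ∧ IsTransRel (joinT R S) ∧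
      WOLE R (joinT R S) ∧ WOLE S (joinT R S) ∧
      (∀ T : Set (Fin n × Fin n), IsReflRel T → IsTransRel T →
        WOLE R T → WOLE S T → WOLE (joinT R S) T)) := by
  have hR' : IsReflRel (swapR R) := swap_refl hR
  have hS' : IsReflRel (swapR S) := swap_refl hS
  have htR' : IsTransRel (swapR R) := swap_trans htR
  have htS' : IsTransRel (swapR S) := swap_trans htS
  have hE : meetT (swapR R) (swapR S) = swapR (joinT R S) := meet_swap
  refine ⟨⟨meet_refl hR hS, meet_trans hR htR hS htS, meet_le_left hR hS,
    meet_le_right hR hS, fun T hT htT h1 h2 => meet_glb hR htR hS htS T hT htT h1 h2⟩,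
    ?_, ?_, ?_, ?_, ?_⟩
  · have h := meet_refl hR' hS'
    rw [hE] at h
    exact fun a => h a
  · have h := meet_trans hR' htR' hS' htS'
    rw [hE] at h
    have h2 := swap_trans h
    rwa [swap_swap] at h2
  · have h := meet_le_left hR' hS'
    rw [hE] at h
    exact WOLE_swap.1 h
  · have h := meet_le_right hR' hS'
    rw [hE] at h
    exact WOLE_swap.1 h
  · intro T hT htT h1 h2
    have g := meet_glb hR' htR' hS' htS' (swapR T) (swap_refl hT) (swap_trans htT)
      (WOLE_swap.2 h1) (WOLE_swap.2 h2)
    rw [hE] at g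
    exact WOLE_swap.1 g
end

section
/- If R and S are partial orders on [n] (reflexive, transitive, antisymmetric relations), then tdd(tc(Inc(R) ∪ Inc(S)) ∪ (Dec(R) ∩ Dec(S))) is antisymmetric. Consequently, the set of all partial orders on [n] forms a lattice under the weak order. -/
/-- A poset on [n] is a reflexive transitive antisymmetric relation. -/
def IsPosetRel {n : ℕ} (R : Set (Fin n × Fin n)) : Prop :=
  IsReflRel R ∧ IsTransRel R ∧ IsAntisymRel R

namespace PL

open Relation

variable {n : ℕ}

def stp (R S : Set (Fin n × Fin n)) (u v : Fin n) : Prop := (u, v) ∈ IncR R ∪ IncR S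

def II (R S : Set (Fin n × Fin n)) : Set (Fin n × Fin n) := tcR (IncR R ∪ IncR S)

def DD (R S : Set (Fin n × Fin n)) : Set (Fin n × Fin n) := DecR R ∩ DecR S

def KK (R S : Set (Fin n × Fin n)) : Set (Fin n × Fin n) := II R S ∪ DD R S

lemma mem_II {R S : Set (Fin n × Fin n)} {u v : Fin n} :
    (u, v) ∈ II R S ↔ Relation.TransGen (stp R S) u v := Iff.rfl

lemma stp_le {R S : Set (Fin n × Fin n)} {u v : Fin n} (h : stp R S u v) : u ≤ v := by
  rcases h with h | h <;> exact h.2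

lemma II_le {R S : Set (Fin n × Fin n)} {u v : Fin n} (h : (u, v) ∈ II R S) : u ≤ v := by
  rw [mem_II] at h
  induction h with
  | single h => exact stp_le h
  | tail _ h ih => exact le_trans ih (stp_le h)

lemma II_trans {R S : Set (Fin n × Fin n)} {u v w : Fin n}
    (h1 : (u, v) ∈ II R S) (h2 : (v, w) ∈ II R S) : (u, w) ∈ II R S :=
  Relation.TransGen.trans h1 h2

lemma II_refl {R S : Set (Fin n × Fin n)} (hR : IsReflRel R) (a : Fin n) :
    (a, a) ∈ II R S :=
  Relation.TransGen.single (Or.inl ⟨hR a, le_refl a⟩)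

lemma DD_refl {R S : Set (Fin n × Fin n)} (hR : IsReflRel R) (hS : IsReflRel S)
    (a : Fin n) : (a, a) ∈ DD R S :=
  ⟨⟨hR a, le_refl a⟩, ⟨hS a, le_refl a⟩⟩

lemma K_refl {R S : Set (Fin n × Fin n)} (hR : IsReflRel R) (a : Fin n) :
    (a, a) ∈ KK R S := Or.inl (II_refl hR a)

lemma K_inc {R S : Set (Fin n × Fin n)} (hR : IsReflRel R) {u v : Fin n}
    (h : (u, v) ∈ KK R S) (hle : u ≤ v) : (u, v) ∈ II R S := by
  rcases h with h | h
  · exact h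
  · have : u = v := le_antisymm hle h.1.2
    subst this
    exact II_refl hR u

lemma K_dec {R S : Set (Fin n × Fin n)} (hR : IsReflRel R) (hS : IsReflRel S)
    {u v : Fin n} (h : (u, v) ∈ KK R S) (hle : v ≤ u) : (u, v) ∈ DD R S := by
  rcases h with h | h
  · have : u = v := le_antisymm (II_le h) hle
    subst this
    exact DD_refl hR hS u
  · exact h

lemma DD_trans {R S : Set (Fin n × Fin n)} (hR : IsTransRel R) (hS : IsTransRel S)
    {u v w : Fin n} (h1 : (u, v) ∈ DD R S) (h2 : (v, w) ∈ DD R S) : (u, w) ∈ DD R S :=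
  ⟨⟨hR u v w h1.1.1 h2.1.1, le_trans h2.1.2 h1.1.2⟩,
   ⟨hS u v w h1.2.1 h2.2.1, le_trans h2.2.2 h1.2.2⟩⟩

lemma mem_meetT {R S : Set (Fin n × Fin n)} {u v : Fin n} :
    (u, v) ∈ meetT R S ↔ (u, v) ∈ KK R S ∧
      ¬(v ≤ u ∧ ∃ i j : Fin n, i ≤ u ∧ v ≤ j ∧ (i, u) ∈ KK R S ∧ (u, v) ∈ KK R S ∧
        (v, j) ∈ KK R S ∧ (i, j) ∉ KK R S) := Iff.rfl

/-- The survival property of a pair in the meet. -/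
def Surv (R S : Set (Fin n × Fin n)) (u v : Fin n) : Prop :=
  ∀ i j : Fin n, i ≤ u → v ≤ j → (i, u) ∈ KK R S → (v, j) ∈ KK R S → (i, j) ∈ KK R S

lemma survM {R S : Set (Fin n × Fin n)} (hR : IsPosetRel R) {u v : Fin n}
    (h : (u, v) ∈ meetT R S) : Surv R S u v := by
  obtain ⟨hK, hnd⟩ := mem_meetT.1 h
  intro i j hiu hvj hiK hvK
  rcases le_total v u with hvu | huv
  · by_contra hc
    exact hnd ⟨hvu, i, j, hiu, hvj, hiK, hK, hvK, hc⟩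
  · exact Or.inl (II_trans (K_inc hR.1 hiK hiu)
      (II_trans (K_inc hR.1 hK huv) (K_inc hR.1 hvK hvj)))

lemma memM_of {R S : Set (Fin n × Fin n)} {u v : Fin n}
    (hK : (u, v) ∈ KK R S) (hs : Surv R S u v) : (u, v) ∈ meetT R S := by
  rw [mem_meetT]
  refine ⟨hK, ?_⟩
  rintro ⟨_, i, j, h1, h2, h3, _, h5, h6⟩
  exact h6 (hs i j h1 h2 h3 h5)

lemma II_sub_meetT {R S : Set (Fin n × Fin n)} (hR : IsPosetRel R) {u v : Fin n}
    (h : (u, v) ∈ II R S) : (u, v) ∈ meetT R S := by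
  refine memM_of (Or.inl h) ?_
  intro i j hiu hvj hiK hvK
  exact Or.inl (II_trans (K_inc hR.1 hiK hiu) (II_trans h (K_inc hR.1 hvK hvj)))

lemma meetT_refl {R S : Set (Fin n × Fin n)} (hR : IsPosetRel R) :
    IsReflRel (meetT R S) := fun a => II_sub_meetT hR (II_refl hR.1 a)

lemma meetT_trans {R S : Set (Fin n × Fin n)} (hR : IsPosetRel R) (hS : IsPosetRel S) :
    IsTransRel (meetT R S) := by
  intro p q r hpq hqr
  have hpqK : (p, q) ∈ KK R S := (mem_meetT.1 hpq).1
  have hqrK : (q, r) ∈ KK R S := (mem_meetT.1 hqr).1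
  have sp := survM hR hpq
  have sq := survM hR hqr
  have hK : (p, r) ∈ KK R S := by
    rcases le_total q r with h | h
    · exact sp p r le_rfl h (K_refl hR.1 p) hqrK
    · rcases le_total p q with h' | h'
      · exact sq p r h' le_rfl hpqK (K_refl hR.1 r)
      · exact Or.inr (DD_trans hR.2.1 hS.2.1
          (K_dec hR.1 hS.1 hpqK h') (K_dec hR.1 hS.1 hqrK h))
  refine memM_of hK ?_
  intro i j hip hrj hiK hrK
  have hiq : (i, q) ∈ KK R S := sp i q hip le_rfl hiK (K_refl hR.1 q)
  have hqj : (q, j) ∈ KK R S := sq q j le_rfl hrj (K_refl hR.1 q) hrK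
  rcases le_total i q with h | h
  · exact sq i j h hrj hiq hrK
  · rcases le_total q j with h' | h'
    · exact sp i j hip h' hiK hqj
    · exact Or.inr (DD_trans hR.2.1 hS.2.1
        (K_dec hR.1 hS.1 hiq h) (K_dec hR.1 hS.1 hqj h'))

lemma meetT_antisym_aux {R S : Set (Fin n × Fin n)} (hR : IsPosetRel R) (hS : IsPosetRel S)
    {u v : Fin n} (huv : (u, v) ∈ meetT R S) (hvu : (v, u) ∈ meetT R S)
    (hle : v ≤ u) : u = v := by
  have hKuv : (u, v) ∈ KK R S := (mem_meetT.1 huv).1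
  have sp := survM hR huv
  have hIvu : Relation.TransGen (stp R S) v u :=
    mem_II.1 (K_inc hR.1 (mem_meetT.1 hvu).1 hle)
  have main : ∀ a, Relation.TransGen (stp R S) a u → a = v → u = v := by
    intro a h
    induction h using Relation.TransGen.head_induction_on with
    | single hstep =>
      intro ha
      rw [ha] at hstep
      have hD := K_dec hR.1 hS.1 hKuv hle
      rcases hstep with ⟨hm, _⟩ | ⟨hm, _⟩
      · exact hR.2.2 u _ hD.1.1 hm
      · exact hS.2.2 u _ hD.2.1 hm
    | head hstep h ih =>
      intro ha
      rw [ha] at hstep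
      rename_i c
      have hcu : c ≤ u := II_le (mem_II.2 h)
      have hcvK : (c, v) ∈ KK R S := sp c v hcu le_rfl (Or.inl (mem_II.2 h)) (K_refl hR.1 v)
      have hvc : v ≤ c := stp_le hstep
      have hD := K_dec hR.1 hS.1 hcvK hvc
      have hcv : c = v := by
        rcases hstep with ⟨hm, _⟩ | ⟨hm, _⟩
        · exact hR.2.2 c v hD.1.1 hm
        · exact hS.2.2 c v hD.2.1 hm
      exact ih hcv
  exact main v hIvu rfl

lemma meetT_antisym {R S : Set (Fin n × Fin n)} (hR : IsPosetRel R) (hS : IsPosetRel S) :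
    IsAntisymRel (meetT R S) := by
  intro u v h1 h2
  rcases le_total v u with h | h
  · exact meetT_antisym_aux hR hS h1 h2 h
  · exact (meetT_antisym_aux hR hS h2 h1 h).symm

lemma meetT_poset {R S : Set (Fin n × Fin n)} (hR : IsPosetRel R) (hS : IsPosetRel S) :
    IsPosetRel (meetT R S) :=
  ⟨meetT_refl hR, meetT_trans hR hS, meetT_antisym hR hS⟩

lemma meetT_le_left {R S : Set (Fin n × Fin n)} (hR : IsPosetRel R) (hS : IsPosetRel S) :
    WOLE (meetT R S) R := by
  constructor
  · rintro ⟨u, v⟩ ⟨hm, hle⟩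
    exact ⟨II_sub_meetT hR (Relation.TransGen.single (Or.inl ⟨hm, hle⟩)), hle⟩
  · rintro ⟨u, v⟩ ⟨hm, hle⟩
    exact (K_dec hR.1 hS.1 (mem_meetT.1 hm).1 hle).1

lemma meetT_le_right {R S : Set (Fin n × Fin n)} (hR : IsPosetRel R) (hS : IsPosetRel S) :
    WOLE (meetT R S) S := by
  constructor
  · rintro ⟨u, v⟩ ⟨hm, hle⟩
    exact ⟨II_sub_meetT hR (Relation.TransGen.single (Or.inr ⟨hm, hle⟩)), hle⟩
  · rintro ⟨u, v⟩ ⟨hm, hle⟩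
    exact (K_dec hR.1 hS.1 (mem_meetT.1 hm).1 hle).2

section GLB

variable {R S T : Set (Fin n × Fin n)} (hR : IsPosetRel R) (hS : IsPosetRel S)
  (hT : IsPosetRel T) (hTR : WOLE T R) (hTS : WOLE T S)

include hTR hTS in
lemma stp_sub_T {a b : Fin n} (h : stp R S a b) : (a, b) ∈ T := by
  rcases h with h | h
  · exact (hTR.1 h).1
  · exact (hTS.1 h).1

include hT hTR hTS in
lemma II_sub_T {u v : Fin n} (h : (u, v) ∈ II R S) : (u, v) ∈ T := by
  rw [mem_II] at h
  induction h with
  | single h => exact stp_sub_T hTR hTS h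
  | tail _ h ih => exact hT.2.1 _ _ _ ih (stp_sub_T hTR hTS h)

include hTR hTS in
lemma DecT_sub_DD {u v : Fin n} (h : (u, v) ∈ DecR T) : (u, v) ∈ DD R S :=
  ⟨hTR.2 h, hTS.2 h⟩

include hR hS hT hTR hTS in
lemma lemA {b j : Fin n} :
    ∀ a, Relation.TransGen (stp R S) a j → (b, a) ∈ T → a ≤ b → (b, j) ∈ KK R S := by
  intro a h
  induction h using Relation.TransGen.head_induction_on with
  | single hstep =>
    rename_i a'
    intro hba hab
    have hD : (b, a') ∈ DD R S := DecT_sub_DD hTR hTS ⟨hba, hab⟩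
    rcases le_total b j with hbj | hjb
    · rcases hstep with ⟨hm, _⟩ | ⟨hm, _⟩
      · exact Or.inl (Relation.TransGen.single (Or.inl ⟨hR.2.1 _ _ _ hD.1.1 hm, hbj⟩))
      · exact Or.inl (Relation.TransGen.single (Or.inr ⟨hS.2.1 _ _ _ hD.2.1 hm, hbj⟩))
    · exact Or.inr (DecT_sub_DD hTR hTS
        ⟨hT.2.1 _ _ _ hba (stp_sub_T hTR hTS hstep), hjb⟩)
  | head hstep h ih =>
    rename_i a' c
    intro hba hab
    have hbc : (b, c) ∈ T := hT.2.1 _ _ _ hba (stp_sub_T hTR hTS hstep)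
    rcases le_total c b with hcb | hbc' 
    · exact ih hbc hcb
    · have hD : (b, a') ∈ DD R S := DecT_sub_DD hTR hTS ⟨hba, hab⟩
      rcases hstep with ⟨hm, _⟩ | ⟨hm, _⟩
      · exact Or.inl (Relation.TransGen.head (Or.inl ⟨hR.2.1 _ _ _ hD.1.1 hm, hbc'⟩) h)
      · exact Or.inl (Relation.TransGen.head (Or.inr ⟨hS.2.1 _ _ _ hD.2.1 hm, hbc'⟩) h)

include hR hS hT hTR hTS in
lemma lemA' {b a j : Fin n} (h : (b, a) ∈ DecR T)
    (hc : (a, j) ∈ II R S ∨ a = j) : (b, j) ∈ KK R S := by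
  rcases hc with hc | rfl
  · exact lemA hR hS hT hTR hTS a hc h.1 h.2
  · exact Or.inr (DecT_sub_DD hTR hTS h)

include hR hS hT hTR hTS in
lemma lemB {i j : Fin n} :
    ∀ {b}, Relation.TransGen (stp R S) i b → ∀ a, (b, a) ∈ T → a ≤ b →
      ((a, j) ∈ II R S ∨ a = j) → (i, j) ∈ KK R S := by
  intro b h
  induction h with
  | single hstep =>
    rename_i b'
    intro a hba hab hchain
    rcases le_total a i with hai | hia
    · have hia' : (i, a) ∈ T := hT.2.1 _ _ _ (stp_sub_T hTR hTS hstep) hba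
      exact lemA' hR hS hT hTR hTS ⟨hia', hai⟩ hchain
    · have hD : (b', a) ∈ DD R S := DecT_sub_DD hTR hTS ⟨hba, hab⟩
      have hIia : (i, a) ∈ II R S := by
        rcases hstep with ⟨hm, _⟩ | ⟨hm, _⟩
        · exact Relation.TransGen.single (Or.inl ⟨hR.2.1 _ _ _ hm hD.1.1, hia⟩)
        · exact Relation.TransGen.single (Or.inr ⟨hS.2.1 _ _ _ hm hD.2.1, hia⟩)
      rcases hchain with hc | rfl
      · exact Or.inl (II_trans hIia hc)
      · exact Or.inl hIia
  | tail hpath hstep ih =>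
    rename_i x b'
    intro a hba hab hchain
    have hxa : (x, a) ∈ T := hT.2.1 _ _ _ (stp_sub_T hTR hTS hstep) hba
    rcases le_total a x with hax | hxa'
    · exact ih a hxa hax hchain
    · have hD : (b', a) ∈ DD R S := DecT_sub_DD hTR hTS ⟨hba, hab⟩
      have hIxa : (x, a) ∈ II R S := by
        rcases hstep with ⟨hm, _⟩ | ⟨hm, _⟩
        · exact Relation.TransGen.single (Or.inl ⟨hR.2.1 _ _ _ hm hD.1.1, hxa'⟩)
        · exact Relation.TransGen.single (Or.inr ⟨hS.2.1 _ _ _ hm hD.2.1, hxa'⟩)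
      have hIia : (i, a) ∈ II R S := II_trans (mem_II.2 hpath) hIxa
      rcases hchain with hc | rfl
      · exact Or.inl (II_trans hIia hc)
      · exact Or.inl hIia

include hR hS hT hTR hTS in
lemma meetT_glb : WOLE T (meetT R S) := by
  constructor
  · rintro ⟨u, v⟩ ⟨hm, hle⟩
    exact ⟨II_sub_T hT hTR hTS (K_inc hR.1 (mem_meetT.1 hm).1 hle), hle⟩
  · rintro ⟨u, v⟩ ⟨hm, hle⟩
    refine ⟨memM_of (Or.inr (DecT_sub_DD hTR hTS ⟨hm, hle⟩)) ?_, hle⟩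
    intro i j hiu hvj hiK hvK
    exact lemB hR hS hT hTR hTS (mem_II.1 (K_inc hR.1 hiK hiu)) v hm hle
      (Or.inl (K_inc hR.1 hvK hvj))

end GLB

/-- Transpose of a relation. -/
def trp (R : Set (Fin n × Fin n)) : Set (Fin n × Fin n) := {p | (p.2, p.1) ∈ R}

lemma trp_trp (R : Set (Fin n × Fin n)) : trp (trp R) = R := rfl

lemma trp_poset {R : Set (Fin n × Fin n)} (hR : IsPosetRel R) : IsPosetRel (trp R) :=
  ⟨fun a => hR.1 a,
   fun u v w h1 h2 => hR.2.1 w v u h2 h1,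
   fun u v h1 h2 => (hR.2.2 v u h1 h2).symm⟩

lemma trp_wole {A B : Set (Fin n × Fin n)} (h : WOLE A B) : WOLE (trp B) (trp A) := by
  obtain ⟨h1, h2⟩ := h
  constructor
  · rintro ⟨u, v⟩ ⟨hm, hle⟩
    exact ⟨(h2 ⟨hm, hle⟩).1, hle⟩
  · rintro ⟨u, v⟩ ⟨hm, hle⟩
    exact ⟨(h1 ⟨hm, hle⟩).1, hle⟩

end PL

/-- The transitive meet of two posets is antisymmetric; consequently the set of
all posets on [n] forms a lattice under the weak order. -/
theorem posets_lattice (n : ℕ) :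
    (∀ R S : Set (Fin n × Fin n), IsPosetRel R → IsPosetRel S →
      IsAntisymRel (meetT R S)) ∧
    (∀ R S : Set (Fin n × Fin n), IsPosetRel R → IsPosetRel S →
      (∃ M : Set (Fin n × Fin n), IsPosetRel M ∧ WOLE M R ∧ WOLE M S ∧
        ∀ T : Set (Fin n × Fin n), IsPosetRel T → WOLE T R → WOLE T S → WOLE T M) ∧
      (∃ J : Set (Fin n × Fin n), IsPosetRel J ∧ WOLE R J ∧ WOLE S J ∧
        ∀ T : Set (Fin n × Fin n), IsPosetRel T → WOLE R T → WOLE S T → WOLE J T)) := by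
  constructor
  · intro R S hR hS
    exact PL.meetT_antisym hR hS
  · intro R S hR hS
    constructor
    · exact ⟨meetT R S, PL.meetT_poset hR hS, PL.meetT_le_left hR hS,
        PL.meetT_le_right hR hS,
        fun T hT h1 h2 => PL.meetT_glb hR hS hT h1 h2⟩
    · refine ⟨PL.trp (meetT (PL.trp R) (PL.trp S)), ?_, ?_, ?_, ?_⟩
      · exact PL.trp_poset (PL.meetT_poset (PL.trp_poset hR) (PL.trp_poset hS))
      · have := PL.trp_wole (PL.meetT_le_left (PL.trp_poset hR) (PL.trp_poset hS))
        rwa [PL.trp_trp] at this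
      · have := PL.trp_wole (PL.meetT_le_right (PL.trp_poset hR) (PL.trp_poset hS))
        rwa [PL.trp_trp] at this
      · intro T hT h1 h2
        have := PL.trp_wole (PL.meetT_glb (PL.trp_poset hR) (PL.trp_poset hS)
          (PL.trp_poset hT) (PL.trp_wole h1) (PL.trp_wole h2))
        rwa [PL.trp_trp] at this
end

section
/- All cover relations in the weak order on partial orders on [n] are cover relations in the weak order on all reflexive relations; in particular, the weak order on partial orders on [n] is graded by the function R ↦ |Dec(R)| − |Inc(R)|. -/
/-- Cover relations of the weak order restricted to posets. -/
def CoversPos {n : ℕ} (R S : Set (Fin n × Fin n)) : Prop :=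
  WOLE R S ∧ R ≠ S ∧
    ∀ T : Set (Fin n × Fin n), IsPosetRel T → WOLE R T → WOLE T S → T = R ∨ T = S

section Aux

variable {n : ℕ}

lemma rel_eq_union (T : Set (Fin n × Fin n)) : T = IncR T ∪ DecR T := by
  ext p
  constructor
  · intro hp
    rcases le_total p.1 p.2 with h | h
    · exact Or.inl ⟨hp, h⟩
    · exact Or.inr ⟨hp, h⟩
  · rintro (⟨hp, -⟩ | ⟨hp, -⟩) <;> exact hp

lemma incR_diff (P : Set (Fin n × Fin n)) (p : Fin n × Fin n) :
    IncR (P \ {p}) = IncR P \ {p} := by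
  ext q
  simp only [IncR, Set.mem_diff, Set.mem_setOf_eq, Set.mem_singleton_iff]
  tauto

lemma decR_diff (P : Set (Fin n × Fin n)) (p : Fin n × Fin n) :
    DecR (P \ {p}) = DecR P \ {p} := by
  ext q
  simp only [DecR, Set.mem_diff, Set.mem_setOf_eq, Set.mem_singleton_iff]
  tauto

/-- In `D ⊆ P`, if every composite pair of `D` splits with a half in `D`, then some pair of
`D` is non-composite in `P`. -/
lemma exists_nonsplit (P D : Set (Fin n × Fin n)) (hP : IsPosetRel P)
    (hDP : D ⊆ P)
    (hsplit : ∀ a b c : Fin n, (a, b) ∈ D → (a, c) ∈ P → (c, b) ∈ P → c ≠ a → c ≠ b →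
      (a, c) ∈ D ∨ (c, b) ∈ D)
    (hne : D.Nonempty) :
    ∃ p ∈ D, ∀ c : Fin n, c ≠ p.1 → c ≠ p.2 → ¬((p.1, c) ∈ P ∧ (c, p.2) ∈ P) := by
  classical
  obtain ⟨p, hpD, hmin⟩ :=
    Set.exists_min_image D (fun p => {c : Fin n | (p.1, c) ∈ P ∧ (c, p.2) ∈ P}.ncard)
      D.toFinite hne
  refine ⟨p, hpD, ?_⟩
  obtain ⟨a, b⟩ := p
  rintro c hca hcb ⟨h1, h2⟩
  rcases hsplit a b c hpD h1 h2 hca hcb with hD | hD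
  · have hsub : {d : Fin n | (a, d) ∈ P ∧ (d, c) ∈ P} ⊂ {d : Fin n | (a, d) ∈ P ∧ (d, b) ∈ P} := by
      constructor
      · rintro d ⟨hd1, hd2⟩
        exact ⟨hd1, hP.2.1 d c b hd2 h2⟩
      · intro hss
        have hb : b ∈ {d : Fin n | (a, d) ∈ P ∧ (d, b) ∈ P} := ⟨hDP hpD, hP.1 b⟩
        have hb' := hss hb
        exact hcb (hP.2.2 c b h2 hb'.2)
    have hlt := Set.ncard_lt_ncard hsub (Set.toFinite _)
    have := hmin (a, c) hD
    simp only at this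
    omega
  · have hsub : {d : Fin n | (c, d) ∈ P ∧ (d, b) ∈ P} ⊂ {d : Fin n | (a, d) ∈ P ∧ (d, b) ∈ P} := by
      constructor
      · rintro d ⟨hd1, hd2⟩
        exact ⟨hP.2.1 a c d h1 hd1, hd2⟩
      · intro hss
        have ha : a ∈ {d : Fin n | (a, d) ∈ P ∧ (d, b) ∈ P} := ⟨hP.1 a, hDP hpD⟩
        have ha' := hss ha
        exact hca (hP.2.2 c a ha'.1 h1)
    have hlt := Set.ncard_lt_ncard hsub (Set.toFinite _)
    have := hmin (c, b) hD
    simp only at this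
    omega

/-- Removing a non-composite off-diagonal pair from a poset gives a poset. -/
lemma delete_poset (P : Set (Fin n × Fin n)) (hP : IsPosetRel P) (a b : Fin n) (hab : a ≠ b)
    (hns : ∀ c : Fin n, c ≠ a → c ≠ b → ¬((a, c) ∈ P ∧ (c, b) ∈ P)) :
    IsPosetRel (P \ {(a, b)}) := by
  refine ⟨?_, ?_, ?_⟩
  · intro x
    refine ⟨hP.1 x, ?_⟩
    simp only [Set.mem_singleton_iff, Prod.mk.injEq]
    rintro ⟨rfl, rfl⟩
    exact hab rfl
  · rintro u v w ⟨huv, huv'⟩ ⟨hvw, hvw'⟩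
    refine ⟨hP.2.1 u v w huv hvw, ?_⟩
    simp only [Set.mem_singleton_iff, Prod.mk.injEq]
    rintro ⟨rfl, rfl⟩
    by_cases hva : v = u
    · subst hva; exact hvw' rfl
    by_cases hvb : v = w
    · subst hvb; exact huv' rfl
    · exact hns v hva hvb ⟨huv, hvw⟩
  · intro u v h1 h2
    exact hP.2.2 u v h1.1 h2.1

/-- Main combinatorial step: a cover among posets differs by exactly one pair. -/
lemma cover_diff_single (R S : Set (Fin n × Fin n)) (hR : IsPosetRel R) (hS : IsPosetRel S)
    (h : CoversPos R S) :
    (∃ p, p ∈ IncR R ∧ p ∉ IncR S ∧ S = R \ {p} ∧ DecR R = DecR S ∧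
        IncR S = IncR R \ {p}) ∨
    (∃ p, p ∈ DecR S ∧ p ∉ DecR R ∧ R = S \ {p} ∧ IncR R = IncR S ∧
        DecR R = DecR S \ {p}) := by
  obtain ⟨hWO, hRS, hcov⟩ := h
  by_cases hInc : IncR R = IncR S
  · -- Case B: decreasing parts differ
    right
    have hDecne : DecR R ≠ DecR S := by
      intro hd
      exact hRS (by rw [rel_eq_union R, rel_eq_union S, hInc, hd])
    obtain ⟨p0, hp0S, hp0R⟩ := Set.exists_of_ssubset (hWO.2.ssubset_of_ne hDecne)
    obtain ⟨p, hpD, hns⟩ := exists_nonsplit S (DecR S \ DecR R) hS (fun q hq => hq.1.1)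
      (by
        rintro a b c ⟨habS, habR⟩ hac hcb hca hcb'
        by_cases h1 : (a, c) ∈ DecR S \ DecR R
        · exact Or.inl h1
        by_cases h2 : (c, b) ∈ DecR S \ DecR R
        · exact Or.inr h2
        exfalso
        rw [Set.mem_diff] at h1 h2
        push_neg at h1 h2
        have hacR : (a, c) ∈ R := by
          rcases le_total a c with hle | hle
          · have : (a, c) ∈ IncR S := ⟨hac, hle⟩
            rw [← hInc] at this; exact this.1
          · exact (h1 ⟨hac, hle⟩).1
        have hcbR : (c, b) ∈ R := by
          rcases le_total c b with hle | hle
          · have : (c, b) ∈ IncR S := ⟨hcb, hle⟩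
            rw [← hInc] at this; exact this.1
          · exact (h2 ⟨hcb, hle⟩).1
        exact habR ⟨hR.2.1 a c b hacR hcbR, habS.2⟩)
      ⟨p0, hp0S, hp0R⟩
    obtain ⟨⟨a, b⟩, hab⟩ : ∃ q : Fin n × Fin n, q = p := ⟨p, rfl⟩
    subst hab
    have hba : b ≤ a := hpD.1.2
    have hane : a ≠ b := by
      rintro rfl
      exact hpD.2 ⟨hR.1 a, le_refl a⟩
    have hTpos : IsPosetRel (S \ {(a, b)}) := delete_poset S hS a b hane hns
    have habS : (a, b) ∈ S := hpD.1.1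
    have habIncS : (a, b) ∉ IncR S := by
      rintro ⟨-, hle⟩
      exact hane (le_antisymm hle hba)
    have hWORT : WOLE R (S \ {(a, b)}) := by
      constructor
      · intro q hq
        rw [incR_diff] at hq
        rw [← hInc] at hq
        exact hq.1
      · intro q hq
        rw [decR_diff]
        refine ⟨hWO.2 hq, ?_⟩
        simp only [Set.mem_singleton_iff]
        rintro rfl
        exact hpD.2 hq
    have hWOTS : WOLE (S \ {(a, b)}) S := by
      constructor
      · intro q hq
        rw [incR_diff]
        refine ⟨hq, ?_⟩
        simp only [Set.mem_singleton_iff]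
        rintro rfl
        exact habIncS hq
      · intro q hq
        rw [decR_diff] at hq
        exact hq.1
    rcases hcov _ hTpos hWORT hWOTS with hTR | hTS
    · refine ⟨(a, b), hpD.1, hpD.2, hTR.symm, hInc, ?_⟩
      rw [← hTR, decR_diff]
    · exfalso
      have : (a, b) ∈ S \ {(a, b)} := by rw [hTS]; exact habS
      exact this.2 rfl
  · -- Case A: increasing parts differ
    left
    obtain ⟨p0, hp0R, hp0S⟩ := Set.exists_of_ssubset (hWO.1.ssubset_of_ne (Ne.symm hInc))
    obtain ⟨p, hpD, hns⟩ := exists_nonsplit R (IncR R \ IncR S) hR (fun q hq => hq.1.1)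
      (by
        rintro a b c ⟨habR, habS⟩ hac hcb hca hcb'
        by_cases h1 : (a, c) ∈ IncR R \ IncR S
        · exact Or.inl h1
        by_cases h2 : (c, b) ∈ IncR R \ IncR S
        · exact Or.inr h2
        exfalso
        rw [Set.mem_diff] at h1 h2
        push_neg at h1 h2
        have hacS : (a, c) ∈ S := by
          rcases le_total a c with hle | hle
          · exact (h1 ⟨hac, hle⟩).1
          · exact (hWO.2 ⟨hac, hle⟩).1
        have hcbS : (c, b) ∈ S := by
          rcases le_total c b with hle | hle
          · exact (h2 ⟨hcb, hle⟩).1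
          · exact (hWO.2 ⟨hcb, hle⟩).1
        exact habS ⟨hS.2.1 a c b hacS hcbS, habR.2⟩)
      ⟨p0, hp0R, hp0S⟩
    obtain ⟨⟨a, b⟩, hab⟩ : ∃ q : Fin n × Fin n, q = p := ⟨p, rfl⟩
    subst hab
    have hba : a ≤ b := hpD.1.2
    have hane : a ≠ b := by
      rintro rfl
      exact hpD.2 ⟨hS.1 a, le_refl a⟩
    have hTpos : IsPosetRel (R \ {(a, b)}) := delete_poset R hR a b hane hns
    have habR : (a, b) ∈ R := hpD.1.1
    have habDecR : (a, b) ∉ DecR R := by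
      rintro ⟨-, hle⟩
      exact hane (le_antisymm hba hle)
    have hWORT : WOLE R (R \ {(a, b)}) := by
      constructor
      · intro q hq
        rw [incR_diff] at hq
        exact hq.1
      · intro q hq
        rw [decR_diff]
        refine ⟨hq, ?_⟩
        simp only [Set.mem_singleton_iff]
        rintro rfl
        exact habDecR hq
    have hWOTS : WOLE (R \ {(a, b)}) S := by
      constructor
      · intro q hq
        rw [incR_diff]
        refine ⟨hWO.1 hq, ?_⟩
        simp only [Set.mem_singleton_iff]
        rintro rfl
        exact hpD.2 hq
      · intro q hq
        rw [decR_diff] at hq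
        exact hWO.2 hq.1
    rcases hcov _ hTpos hWORT hWOTS with hTR | hTS
    · exfalso
      have : (a, b) ∈ R \ {(a, b)} := by rw [hTR]; exact habR
      exact this.2 rfl
    · refine ⟨(a, b), hpD.1, hpD.2, hTS.symm, ?_, ?_⟩
      · rw [← hTS, decR_diff]
        ext q
        simp only [Set.mem_diff, Set.mem_singleton_iff]
        constructor
        · intro hq
          refine ⟨hq, ?_⟩
          rintro rfl
          exact habDecR hq
        · exact fun hq => hq.1
      · rw [← hTS, incR_diff]

end Aux

/-- All cover relations in the weak order on posets are cover relations in the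
weak order on all reflexive relations; in particular the weak order on posets is
graded by R ↦ |Dec R| - |Inc R|. -/
theorem covers_posets_are_covers_relations (n : ℕ) (R S : Set (Fin n × Fin n))
    (hR : IsPosetRel R) (hS : IsPosetRel S) (h : CoversPos R S) :
    CoversRefl R S ∧ rankR S = rankR R + 1 := by
  have hWO := h.1
  have hRS := h.2.1
  rcases cover_diff_single R S hR hS h with ⟨p, hpI, hpS, hSeq, hDec, hIncS⟩ |
      ⟨p, hpD, hpR, hReq, hInc, hDecR⟩
  · -- S = R \ {p}, p increasing
    constructor
    · refine ⟨hWO, hRS, ?_⟩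
      intro T hTrefl hRT hTS
      have hDecT : DecR T = DecR R :=
        le_antisymm (by rw [hDec]; exact hTS.2) hRT.2
      by_cases hpT : p ∈ IncR T
      · left
        have hIncT : IncR T = IncR R := by
          refine le_antisymm hRT.1 ?_
          intro q hq
          by_cases hqp : q = p
          · subst hqp; exact hpT
          · have : q ∈ IncR S := by rw [hIncS]; exact ⟨hq, hqp⟩
            exact hTS.1 this
        rw [rel_eq_union T, rel_eq_union R, hIncT, hDecT]
      · right
        have hIncT : IncR T = IncR S := by
          refine le_antisymm ?_ hTS.1
          intro q hq
          rw [hIncS]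
          exact ⟨hRT.1 hq, fun hqp => hpT (hqp ▸ hq)⟩
        rw [rel_eq_union T, rel_eq_union S, hIncT, hDecT,
          show DecR R = DecR S from hDec]
    · have hcard : (IncR S).ncard + 1 = (IncR R).ncard := by
        rw [hIncS]
        exact Set.ncard_diff_singleton_add_one hpI (Set.toFinite _)
      unfold rankR
      rw [hDec]
      omega
  · -- R = S \ {p}, p decreasing
    constructor
    · refine ⟨hWO, hRS, ?_⟩
      intro T hTrefl hRT hTS
      have hIncT : IncR T = IncR R :=
        le_antisymm hRT.1 (by rw [hInc]; exact hTS.1)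
      by_cases hpT : p ∈ DecR T
      · right
        have hDecT : DecR T = DecR S := by
          refine le_antisymm hTS.2 ?_
          intro q hq
          by_cases hqp : q = p
          · subst hqp; exact hpT
          · have : q ∈ DecR R := by rw [hDecR]; exact ⟨hq, hqp⟩
            exact hRT.2 this
        rw [rel_eq_union T, rel_eq_union S, hDecT,
          show IncR T = IncR S from hIncT.trans hInc]
      · left
        have hDecT : DecR T = DecR R := by
          refine le_antisymm ?_ hRT.2
          intro q hq
          rw [hDecR]
          exact ⟨hTS.2 hq, fun hqp => hpT (hqp ▸ hq)⟩
        rw [rel_eq_union T, rel_eq_union R, hIncT, hDecT]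
    · have hcard : (DecR R).ncard + 1 = (DecR S).ncard := by
        rw [hDecR]
        exact Set.ncard_diff_singleton_add_one hpD (Set.toFinite _)
      unfold rankR
      rw [hInc]
      omega
end

section
/- Let σ ≤ σ' be permutations of [n] in the weak order. Then a permutation τ lies in the interval [σ, σ'] of the weak order if and only if the total order ≺_τ is a linear extension of the poset ≺_σ ∩ ≺_σ' = Inc(≺_σ') ∪ Dec(≺_σ). -/
/-- The total order on [n] associated to a permutation σ: u ≤ v when u appears
before v in σ. -/
def ordP {n : ℕ} (σ : Equiv.Perm (Fin n)) : Set (Fin n × Fin n) :=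
  {p | σ.symm p.1 ≤ σ.symm p.2}

/-- Versions of a permutation. -/
def verP {n : ℕ} (σ : Equiv.Perm (Fin n)) : Set (Fin n × Fin n) :=
  {p | p.1 ≤ p.2 ∧ σ.symm p.1 ≤ σ.symm p.2}

/-- Inversions of a permutation. -/
def invP {n : ℕ} (σ : Equiv.Perm (Fin n)) : Set (Fin n × Fin n) :=
  {p | p.2 ≤ p.1 ∧ σ.symm p.1 ≤ σ.symm p.2}

/-- A permutation τ lies in the weak order interval [σ, σ'] iff its total order
is a linear extension of the poset ≺_σ ∩ ≺_σ' = Inc(≺_σ') ∪ Dec(≺_σ). -/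
theorem weakOrderIntervalPosets (n : ℕ) (σ σ' : Equiv.Perm (Fin n))
    (h : invP σ ⊆ invP σ') :
    ordP σ ∩ ordP σ' = IncR (ordP σ') ∪ DecR (ordP σ) ∧
    (∀ τ : Equiv.Perm (Fin n),
      (invP σ ⊆ invP τ ∧ invP τ ⊆ invP σ') ↔ ordP σ ∩ ordP σ' ⊆ ordP τ) := by
  constructor
  · ext ⟨u, v⟩
    simp only [Set.mem_inter_iff, Set.mem_union, ordP, IncR, DecR, invP, Set.mem_setOf_eq]
    constructor
    · rintro ⟨h1, h2⟩
      rcases le_total u v with huv | hvu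
      · exact Or.inl ⟨h2, huv⟩
      · exact Or.inr ⟨h1, hvu⟩
    · rintro (⟨h2, huv⟩ | ⟨h1, hvu⟩)
      · rcases le_total (σ.symm u) (σ.symm v) with h1 | h1
        · exact ⟨h1, h2⟩
        · have hh := h (show (v, u) ∈ invP σ from ⟨huv, h1⟩)
          have heq : u = v := σ'.symm.injective (le_antisymm h2 hh.2)
          subst heq; exact ⟨le_refl _, h2⟩
      · exact ⟨h1, (h (show (u, v) ∈ invP σ from ⟨hvu, h1⟩)).2⟩
  · intro τ
    constructor
    · rintro ⟨h1, h2⟩ ⟨u, v⟩ ⟨hu, hv⟩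
      simp only [ordP, Set.mem_setOf_eq] at *
      rcases le_total (τ.symm u) (τ.symm v) with ht | ht
      · exact ht
      · rcases le_total u v with huv | hvu
        · have hh := h2 (show (v, u) ∈ invP τ from ⟨huv, ht⟩)
          have heq : u = v := σ'.symm.injective (le_antisymm hv hh.2)
          simp [heq]
        · exact (h1 (show (u, v) ∈ invP σ from ⟨hvu, hu⟩)).2
    · intro hτ
      constructor
      · rintro ⟨u, v⟩ ⟨hvu, hσ⟩
        have hσ' := (h (show (u, v) ∈ invP σ from ⟨hvu, hσ⟩)).2
        exact ⟨hvu, hτ ⟨hσ, hσ'⟩⟩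
      · rintro ⟨u, v⟩ ⟨hvu, hτuv⟩
        refine ⟨hvu, ?_⟩
        rcases le_total (σ'.symm u) (σ'.symm v) with hs | hs
        · exact hs
        · have hsσ : σ.symm v ≤ σ.symm u := by
            rcases le_total (σ.symm v) (σ.symm u) with h' | h'
            · exact h'
            · have heq : v = u := σ'.symm.injective (le_antisymm hs (h (show (u, v) ∈ invP σ from ⟨hvu, h'⟩)).2)
              exact le_of_eq (congrArg σ.symm heq)
          have hto : τ.symm v ≤ τ.symm u := hτ (show (v, u) ∈ ordP σ ∩ ordP σ' from ⟨hsσ, hs⟩)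
          have heq : u = v := τ.symm.injective (le_antisymm hτuv hto)
          simp [heq]
end

section
/- A partial order ≺ on [n] admits a weak order maximal linear extension if and only if for all a < b < c, a ≺ c implies a ≺ b or b ≺ c. Symmetrically, ≺ admits a weak order minimal linear extension if and only if for all a < b < c, c ≺ a implies b ≺ a or c ≺ b. -/
/-- Totality of a relation. -/
def IsTotalRel {n : ℕ} (R : Set (Fin n × Fin n)) : Prop :=
  ∀ u v : Fin n, (u, v) ∈ R ∨ (v, u) ∈ R

/-- Szpilrajn-type lemma: extend a poset to a linear order forcing `(x,y)`. -/
lemma exists_ext {n : ℕ} (R : Set (Fin n × Fin n))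
    (hrefl : IsReflRel R) (htrans : IsTransRel R) (hanti : IsAntisymRel R)
    (x y : Fin n) (hxy : (y, x) ∉ R) :
    ∃ L : Set (Fin n × Fin n), IsTotalRel L ∧ IsTransRel L ∧ IsAntisymRel L ∧ R ⊆ L ∧
      (x, y) ∈ L := by
  set r : Fin n → Fin n → Prop := fun u v => (u, v) ∈ R ∨ ((u, x) ∈ R ∧ (y, v) ∈ R) with hr
  have hpo : IsPartialOrder (Fin n) r := by
    refine { refl := fun a => Or.inl (hrefl a), trans := ?_, antisymm := ?_ }
    · rintro u v w (h1 | ⟨h1, h2⟩) (h3 | ⟨h3, h4⟩)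
      · exact Or.inl (htrans _ _ _ h1 h3)
      · exact Or.inr ⟨htrans _ _ _ h1 h3, h4⟩
      · exact Or.inr ⟨h1, htrans _ _ _ h2 h3⟩
      · exact Or.inr ⟨h1, h4⟩
    · rintro u v (h1 | ⟨h1, h2⟩) (h3 | ⟨h3, h4⟩)
      · exact hanti _ _ h1 h3
      · exact absurd (htrans _ _ _ h4 (htrans _ _ _ h1 h3)) hxy
      · exact absurd (htrans _ _ _ h2 (htrans _ _ _ h3 h1)) hxy
      · exact absurd (htrans _ _ _ h2 h3) hxy
  obtain ⟨s, hs, hrs⟩ := @extend_partialOrder (Fin n) r hpo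
  refine ⟨{p | s p.1 p.2}, ?_, ?_, ?_, ?_, ?_⟩
  · exact fun u v => hs.total u v
  · exact fun u v w h1 h2 => hs.trans _ _ _ h1 h2
  · exact fun u v h1 h2 => hs.antisymm _ _ h1 h2
  · exact fun p hp => hrs _ _ (Or.inl hp)
  · exact hrs _ _ (Or.inr ⟨hrefl x, hrefl y⟩)

/-- A poset admits a weak order maximal (resp. minimal) linear extension iff for
all a < b < c, a ≺ c implies a ≺ b or b ≺ c (resp. c ≺ a implies b ≺ a or c ≺ b). -/
theorem exists_maximal_minimal_linear_extension (n : ℕ) (R : Set (Fin n × Fin n))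
    (hrefl : IsReflRel R) (htrans : IsTransRel R) (hanti : IsAntisymRel R) :
    ((∃ L : Set (Fin n × Fin n), IsTotalRel L ∧ IsTransRel L ∧ IsAntisymRel L ∧ R ⊆ L ∧
        ∀ L' : Set (Fin n × Fin n),
          IsTotalRel L' → IsTransRel L' → IsAntisymRel L' → R ⊆ L' → WOLE L' L) ↔
      (∀ a b c : Fin n, a < b → b < c → (a, c) ∈ R → (a, b) ∈ R ∨ (b, c) ∈ R)) ∧
    ((∃ L : Set (Fin n × Fin n), IsTotalRel L ∧ IsTransRel L ∧ IsAntisymRel L ∧ R ⊆ L ∧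
        ∀ L' : Set (Fin n × Fin n),
          IsTotalRel L' → IsTransRel L' → IsAntisymRel L' → R ⊆ L' → WOLE L L') ↔
      (∀ a b c : Fin n, a < b → b < c → (c, a) ∈ R → (b, a) ∈ R ∨ (c, b) ∈ R)) := by
  constructor
  · constructor
    · -- maximal exists → condition
      rintro ⟨L, hLtot, hLtrans, hLanti, hRL, hLmax⟩ a b c hab hbc hac
      by_contra h
      push_neg at h
      obtain ⟨h1, h2⟩ := h
      obtain ⟨L1, hT1, hTr1, hA1, hR1, hba⟩ := exists_ext R hrefl htrans hanti b a h1
      obtain ⟨L2, hT2, hTr2, hA2, hR2, hcb⟩ := exists_ext R hrefl htrans hanti c b h2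
      have hba' : (b, a) ∈ L := ((hLmax L1 hT1 hTr1 hA1 hR1).2 ⟨hba, hab.le⟩).1
      have hcb' : (c, b) ∈ L := ((hLmax L2 hT2 hTr2 hA2 hR2).2 ⟨hcb, hbc.le⟩).1
      have : a = c := hLanti _ _ (hRL hac) (hLtrans _ _ _ hcb' hba')
      exact absurd this (hab.trans hbc).ne
    · -- condition → maximal exists
      intro hcond
      refine ⟨{p | p ∈ R ∨ (p.2 < p.1 ∧ (p.2, p.1) ∉ R)}, ?_, ?_, ?_, ?_, ?_⟩
      · intro u v
        rcases lt_trichotomy u v with h | h | h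
        · by_cases hv : (u, v) ∈ R
          · exact Or.inl (Or.inl hv)
          · exact Or.inr (Or.inr ⟨h, hv⟩)
        · exact Or.inl (Or.inl (h ▸ hrefl u))
        · by_cases hv : (v, u) ∈ R
          · exact Or.inr (Or.inl hv)
          · exact Or.inl (Or.inr ⟨h, hv⟩)
      · rintro u v w (h1 | ⟨h1, h1'⟩) (h2 | ⟨h2, h2'⟩)
        · exact Or.inl (htrans _ _ _ h1 h2)
        · -- (u,v) ∈ R, w < v, (w,v) ∉ R
          by_cases huw : (u, w) ∈ R
          · exact Or.inl huw
          have hne : u ≠ w := by rintro rfl; exact h2' h1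
          have hwu : (w, u) ∉ R := fun hc => h2' (htrans _ _ _ hc h1)
          refine Or.inr ⟨?_, hwu⟩
          rcases lt_trichotomy w u with h | h | h
          · exact h
          · exact absurd h.symm hne
          · rcases hcond u w v h h2 h1 with hx | hx
            · exact absurd hx huw
            · exact absurd hx h2'
        · -- v < u, (v,u) ∉ R, (v,w) ∈ R
          by_cases huw : (u, w) ∈ R
          · exact Or.inl huw
          have hne : u ≠ w := by rintro rfl; exact h1' h2
          refine Or.inr ⟨?_, fun hc => h1' (htrans _ _ _ h2 hc)⟩
          rcases lt_trichotomy w u with h | h | h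
          · exact h
          · exact absurd h.symm hne
          · rcases hcond v u w h1 h h2 with hx | hx
            · exact absurd hx h1'
            · exact absurd hx huw
        · -- v < u, (v,u) ∉ R, w < v, (w,v) ∉ R
          refine Or.inr ⟨h2.trans h1, fun hc => ?_⟩
          rcases hcond w v u h2 h1 hc with hx | hx
          · exact h2' hx
          · exact h1' hx
      · rintro u v (h1 | ⟨h1, h1'⟩) (h2 | ⟨h2, h2'⟩)
        · exact hanti _ _ h1 h2
        · exact absurd h1 h2'
        · exact absurd h2 h1'
        · exact absurd h1 (asymm h2)
      · exact fun p hp => Or.inl hp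
      · intro L' hT hTr hA hR
        constructor
        · rintro ⟨u, v⟩ ⟨(hp | ⟨hp, _⟩), hle⟩
          · exact ⟨hR hp, hle⟩
          · exact absurd hle (not_le.mpr hp)
        · rintro ⟨u, v⟩ ⟨hp, hle⟩
          rcases eq_or_lt_of_le (hle : v ≤ u) with heq | hlt
          · exact ⟨Or.inl (by have h' : v = u := heq; subst h'; exact hrefl v), hle⟩
          · refine ⟨Or.inr ⟨hlt, fun hc => ?_⟩, hle⟩
            exact absurd (hA _ _ hp (hR hc)) (ne_of_gt hlt)
  · constructor
    · -- minimal exists → condition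
      rintro ⟨L, hLtot, hLtrans, hLanti, hRL, hLmin⟩ a b c hab hbc hca
      by_contra h
      push_neg at h
      obtain ⟨h1, h2⟩ := h
      obtain ⟨L1, hT1, hTr1, hA1, hR1, hab'⟩ := exists_ext R hrefl htrans hanti a b h1
      obtain ⟨L2, hT2, hTr2, hA2, hR2, hbc'⟩ := exists_ext R hrefl htrans hanti b c h2
      have hab2 : (a, b) ∈ L := ((hLmin L1 hT1 hTr1 hA1 hR1).1 ⟨hab', hab.le⟩).1
      have hbc2 : (b, c) ∈ L := ((hLmin L2 hT2 hTr2 hA2 hR2).1 ⟨hbc', hbc.le⟩).1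
      have : a = c := hLanti _ _ (hLtrans _ _ _ hab2 hbc2) (hRL hca)
      exact absurd this (hab.trans hbc).ne
    · -- condition → minimal exists
      intro hcond
      refine ⟨{p | p ∈ R ∨ (p.1 < p.2 ∧ (p.2, p.1) ∉ R)}, ?_, ?_, ?_, ?_, ?_⟩
      · intro u v
        rcases lt_trichotomy u v with h | h | h
        · by_cases hv : (v, u) ∈ R
          · exact Or.inr (Or.inl hv)
          · exact Or.inl (Or.inr ⟨h, hv⟩)
        · exact Or.inl (Or.inl (h ▸ hrefl u))
        · by_cases hv : (u, v) ∈ R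
          · exact Or.inl (Or.inl hv)
          · exact Or.inr (Or.inr ⟨h, hv⟩)
      · rintro u v w (h1 | ⟨h1, h1'⟩) (h2 | ⟨h2, h2'⟩)
        · exact Or.inl (htrans _ _ _ h1 h2)
        · -- (u,v) ∈ R, v < w, (w,v) ∉ R
          by_cases huw : (u, w) ∈ R
          · exact Or.inl huw
          have hne : u ≠ w := by rintro rfl; exact h2' h1
          have hwu : (w, u) ∉ R := fun hc => h2' (htrans _ _ _ hc h1)
          refine Or.inr ⟨?_, hwu⟩
          rcases lt_trichotomy u w with h | h | h
          · exact h
          · exact absurd h hne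
          · rcases hcond v w u h2 h h1 with hx | hx
            · exact absurd hx h2'
            · exact absurd hx huw
        · -- u < v, (v,u) ∉ R, (v,w) ∈ R
          by_cases huw : (u, w) ∈ R
          · exact Or.inl huw
          have hne : u ≠ w := by rintro rfl; exact h1' h2
          have hwu : (w, u) ∉ R := fun hc => h1' (htrans _ _ _ h2 hc)
          refine Or.inr ⟨?_, hwu⟩
          rcases lt_trichotomy u w with h | h | h
          · exact h
          · exact absurd h hne
          · rcases hcond w u v h h1 h2 with hx | hx
            · exact absurd hx huw
            · exact absurd hx h1'
        · -- u < v, (v,u) ∉ R, v < w, (w,v) ∉ R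
          refine Or.inr ⟨h1.trans h2, fun hc => ?_⟩
          rcases hcond u v w h1 h2 hc with hx | hx
          · exact h1' hx
          · exact h2' hx
      · rintro u v (h1 | ⟨h1, h1'⟩) (h2 | ⟨h2, h2'⟩)
        · exact hanti _ _ h1 h2
        · exact absurd h1 h2'
        · exact absurd h2 h1'
        · exact absurd h1 (asymm h2)
      · exact fun p hp => Or.inl hp
      · intro L' hT hTr hA hR
        constructor
        · rintro ⟨u, v⟩ ⟨hp, hle⟩
          rcases eq_or_lt_of_le (hle : u ≤ v) with heq | hlt
          · exact ⟨Or.inl (by have h' : u = v := heq; subst h'; exact hrefl u), hle⟩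
          · refine ⟨Or.inr ⟨hlt, fun hc => ?_⟩, hle⟩
            exact absurd (hA _ _ hp (hR hc)) (ne_of_lt hlt)
        · rintro ⟨u, v⟩ ⟨(hp | ⟨hp, _⟩), hle⟩
          · exact ⟨hR hp, hle⟩
          · exact absurd hle (not_le.mpr hp)
end

section
/- Let ≺ be a partial order on [n] satisfying: for all a < b < c, a ≺ c implies a ≺ b or b ≺ c. Then the relation obtained from ≺ by adding the pair (b,a) for every a < b incomparable in ≺ is a total order extending ≺, and it is the weak order maximal linear extension of ≺. -/
/-- The relation obtained from R by adding a decreasing relation between any two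
incomparable elements. -/
def maxExt {n : ℕ} (R : Set (Fin n × Fin n)) : Set (Fin n × Fin n) :=
  R ∪ {p | p.2 < p.1 ∧ (p.1, p.2) ∉ R ∧ (p.2, p.1) ∉ R}

/-- For a poset satisfying the IWOIP condition, adding (b,a) for every
incomparable pair a < b yields a total order which is the weak order maximal
linear extension of the poset. -/
theorem maxExt_is_maximal_linear_extension (n : ℕ) (R : Set (Fin n × Fin n))
    (hrefl : IsReflRel R) (htrans : IsTransRel R) (hanti : IsAntisymRel R)
    (hIW : ∀ a b c : Fin n, a < b → b < c → (a, c) ∈ R → (a, b) ∈ R ∨ (b, c) ∈ R) :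
    IsTotalRel (maxExt R) ∧ IsTransRel (maxExt R) ∧ IsAntisymRel (maxExt R) ∧
    R ⊆ maxExt R ∧
    (∀ L : Set (Fin n × Fin n), IsTotalRel L → IsTransRel L → IsAntisymRel L →
      R ⊆ L → WOLE L (maxExt R)) := by
  refine ⟨?_, ?_, ?_, Set.subset_union_left, ?_⟩
  · -- totality
    intro u v
    rcases lt_trichotomy u v with h | h | h
    · by_cases h1 : (u, v) ∈ R
      · exact Or.inl (Or.inl h1)
      by_cases h2 : (v, u) ∈ R
      · exact Or.inr (Or.inl h2)
      · exact Or.inr (Or.inr ⟨h, h2, h1⟩)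
    · exact Or.inl (Or.inl (h ▸ hrefl u))
    · by_cases h1 : (v, u) ∈ R
      · exact Or.inr (Or.inl h1)
      by_cases h2 : (u, v) ∈ R
      · exact Or.inl (Or.inl h2)
      · exact Or.inl (Or.inr ⟨h, h2, h1⟩)
  · -- transitivity
    intro u v w huv hvw
    rcases huv with huv | ⟨hlt1, hn1, hn2⟩
    · rcases hvw with hvw | ⟨hlt2, hn3, hn4⟩
      · exact Or.inl (htrans u v w huv hvw)
      · -- (u,v) ∈ R, w < v incomparable
        by_cases h1 : (u, w) ∈ R
        · exact Or.inl h1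
        by_cases h2 : (w, u) ∈ R
        · exact absurd (htrans w u v h2 huv) hn4
        have hne : u ≠ w := by rintro rfl; exact h1 (hrefl u)
        rcases lt_or_gt_of_ne hne with h | h
        · rcases hIW u w v h hlt2 huv with h3 | h3
          · exact absurd h3 h1
          · exact absurd h3 hn4
        · exact Or.inr ⟨h, h1, h2⟩
    · rcases hvw with hvw | ⟨hlt2, hn3, hn4⟩
      · -- v < u incomparable, (v,w) ∈ R
        by_cases h1 : (u, w) ∈ R
        · exact Or.inl h1
        by_cases h2 : (w, u) ∈ R
        · exact absurd (htrans v w u hvw h2) hn2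
        have hne : u ≠ w := by rintro rfl; exact h2 (hrefl u)
        rcases lt_or_gt_of_ne hne with h | h
        · rcases hIW v u w hlt1 h hvw with h3 | h3
          · exact absurd h3 hn2
          · exact absurd h3 h1
        · exact Or.inr ⟨h, h1, h2⟩
      · -- both added: v < u, w < v
        have hwu : w < u := hlt2.trans hlt1
        by_cases h1 : (u, w) ∈ R
        · exact Or.inl h1
        by_cases h2 : (w, u) ∈ R
        · rcases hIW w v u hlt2 hlt1 h2 with h3 | h3
          · exact absurd h3 hn4
          · exact absurd h3 hn2
        · exact Or.inr ⟨hwu, h1, h2⟩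
  · -- antisymmetry
    intro u v huv hvu
    rcases huv with huv | ⟨hlt1, hn1, hn2⟩
    · rcases hvu with hvu | ⟨hlt2, hn3, hn4⟩
      · exact hanti u v huv hvu
      · exact absurd huv hn4
    · rcases hvu with hvu | ⟨hlt2, hn3, hn4⟩
      · exact absurd hvu hn2
      · exact absurd hlt2 (not_lt_of_gt hlt1)
  · -- maximality
    intro L _hLtot hLtrans hLanti hRL
    constructor
    · rintro ⟨u, v⟩ ⟨hmem, hle⟩
      rcases hmem with h | ⟨hlt, _, _⟩
      · exact ⟨hRL h, hle⟩
      · exact absurd hle (not_le_of_gt hlt)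
    · rintro ⟨u, v⟩ ⟨hmem, hle⟩
      refine ⟨?_, hle⟩
      rcases eq_or_lt_of_le hle with heq | hlt
      · have : u = v := heq.symm
        exact Or.inl (this ▸ hrefl u)
      by_cases h1 : (u, v) ∈ R
      · exact Or.inl h1
      by_cases h2 : (v, u) ∈ R
      · exact absurd (hLanti u v hmem (hRL h2)) (ne_of_gt hlt)
      · exact Or.inr ⟨hlt, h1, h2⟩
end

section
/- For any partial order ≺ on [n], the relation IWOIPid(≺) := ≺ \ {(a,c) : a < c and there exist a < b₁ < ... < b_k < c with a ⊀ b₁ ⊀ b₂ ⊀ ... ⊀ b_k ⊀ c} is a partial order satisfying the condition: for all a < b < c, a IWOIPid(≺) c implies a IWOIPid(≺) b or b IWOIPid(≺) c. -/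
/-- The step relation for deletion chains: u < v and u, v not related in R. -/
def NRel {n : ℕ} (R : Set (Fin n × Fin n)) (u v : Fin n) : Prop :=
  u < v ∧ (u, v) ∉ R

/-- The IWOIP increasing deletion: delete all (a,c) admitting an intermediate
chain a < b₁ < ... < b_k < c with a ⊀ b₁ ⊀ ... ⊀ b_k ⊀ c. -/
def IWOIPid {n : ℕ} (R : Set (Fin n × Fin n)) : Set (Fin n × Fin n) :=
  R \ {p | ∃ b : Fin n, NRel R p.1 b ∧ Relation.TransGen (NRel R) b p.2}

lemma tg_lt {n : ℕ} {R : Set (Fin n × Fin n)} {u v : Fin n}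
    (h : Relation.TransGen (NRel R) u v) : u < v := by
  induction h with
  | single h => exact h.1
  | tail _ h ih => exact ih.trans h.1

lemma key {n : ℕ} {R : Set (Fin n × Fin n)} (htrans : IsTransRel R)
    {x y : Fin n} (h : Relation.TransGen (NRel R) x y) :
    ∀ v : Fin n, (x, v) ∈ R →
      ¬(∃ b, NRel R x b ∧ Relation.TransGen (NRel R) b v) →
      (v, y) ∈ R →
      ¬(∃ b, NRel R v b ∧ Relation.TransGen (NRel R) b y) → False := by
  induction h using Relation.TransGen.head_induction_on with
  | single hxy =>
    intro v hxv _ hvy _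
    exact hxy.2 (htrans _ _ _ hxv hvy)
  | head hxb hby IH =>
    intro v hxv hdxv hvy hdvy
    rename_i b
    by_cases hbv : (b, v) ∈ R
    · by_cases hdbv : ∃ b', NRel R b b' ∧ Relation.TransGen (NRel R) b' v
      · obtain ⟨b', h1, h2⟩ := hdbv
        exact hdxv ⟨b, hxb, h2.head h1⟩
      · exact IH v hbv hdbv hvy hdvy
    · rcases lt_trichotomy v b with hlt | heq | hlt
      · by_cases hvb : (v, b) ∈ R
        · exact hxb.2 (htrans _ _ _ hxv hvb)
        · exact hdvy ⟨b, ⟨hlt, hvb⟩, hby⟩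
      · subst heq; exact hxb.2 hxv
      · exact hdxv ⟨b, hxb, Relation.TransGen.single ⟨hlt, hbv⟩⟩

/-- The IWOIP increasing deletion of a poset is a poset in IWOIP(n). -/
theorem IWOIPid_mem_IWOIP (n : ℕ) (R : Set (Fin n × Fin n))
    (hrefl : IsReflRel R) (htrans : IsTransRel R) (hanti : IsAntisymRel R) :
    IsReflRel (IWOIPid R) ∧ IsTransRel (IWOIPid R) ∧ IsAntisymRel (IWOIPid R) ∧
    (∀ a b c : Fin n, a < b → b < c →
      (a, c) ∈ IWOIPid R → (a, b) ∈ IWOIPid R ∨ (b, c) ∈ IWOIPid R) := by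
  refine ⟨?_, ?_, ?_, ?_⟩
  · intro a
    refine ⟨hrefl a, ?_⟩
    rintro ⟨b, hab, hba⟩
    exact absurd (hab.1.trans (tg_lt hba)) (lt_irrefl a)
  · intro u v w huv hvw
    refine ⟨htrans _ _ _ huv.1 hvw.1, ?_⟩
    rintro ⟨b, hub, hbw⟩
    exact key htrans (hbw.head hub) v huv.1 huv.2 hvw.1 hvw.2
  · intro u v huv hvu
    exact hanti _ _ huv.1 hvu.1
  · intro a b c hab hbc hac
    by_contra hcon
    push_neg at hcon
    obtain ⟨h1, h2⟩ := hcon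
    have tgbc : Relation.TransGen (NRel R) b c := by
      by_cases hbcR : (b, c) ∈ R
      · have : ∃ b', NRel R b b' ∧ Relation.TransGen (NRel R) b' c := by
          by_contra hd
          exact h2 ⟨hbcR, hd⟩
        obtain ⟨b', hb1, hb2⟩ := this
        exact hb2.head hb1
      · exact Relation.TransGen.single ⟨hbc, hbcR⟩
    apply hac.2
    by_cases habR : (a, b) ∈ R
    · have : ∃ b', NRel R a b' ∧ Relation.TransGen (NRel R) b' b := by
        by_contra hd
        exact h1 ⟨habR, hd⟩
      obtain ⟨b', hb1, hb2⟩ := this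
      exact ⟨b', hb1, hb2.trans tgbc⟩
    · exact ⟨b, ⟨hab, habR⟩, tgbc⟩
end

section
/- For any partial order ≺ on [n], the poset IWOIPid(≺) is the weak order minimal element of the set IWOIP(n) that is greater than or equal to ≺, where IWOIP(n) is the set of posets satisfying: for all a < b < c, a ≺ c implies a ≺ b or b ≺ c. -/
/-- Membership in IWOIP(n). -/
def MemIWOIP {n : ℕ} (S : Set (Fin n × Fin n)) : Prop :=
  IsReflRel S ∧ IsTransRel S ∧ IsAntisymRel S ∧
    ∀ a b c : Fin n, a < b → b < c → (a, c) ∈ S → (a, b) ∈ S ∨ (b, c) ∈ S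

lemma transGen_nrel_lt {n : ℕ} {R : Set (Fin n × Fin n)} {a b : Fin n}
    (h : Relation.TransGen (NRel R) a b) : a < b := by
  induction h with
  | single h => exact h.1
  | tail _ h ih => exact ih.trans h.1

lemma iwoipid_main_trans {n : ℕ} {R : Set (Fin n × Fin n)}
    (htrans : IsTransRel R) {w u : Fin n}
    (h : Relation.TransGen (NRel R) u w) :
    ∀ v, u < v → v < w → (u, v) ∈ R → (v, w) ∈ R →
      (¬ ∃ b, NRel R u b ∧ Relation.TransGen (NRel R) b v) →
      (¬ ∃ b, NRel R v b ∧ Relation.TransGen (NRel R) b w) → False := by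
  induction h using Relation.TransGen.head_induction_on with
  | single h =>
    intro v _ _ hR1 hR2 _ _
    exact h.2 (htrans _ _ _ hR1 hR2)
  | head hxc hcw IH =>
    intro v hxv hvw hR1 hR2 hnd1 hnd2
    rename_i x c
    rcases lt_trichotomy v c with hlt | heq | hgt
    · by_cases hvc : (v, c) ∈ R
      · exact hxc.2 (htrans _ _ _ hR1 hvc)
      · exact hnd2 ⟨c, ⟨hlt, hvc⟩, hcw⟩
    · subst heq; exact hxc.2 hR1
    · by_cases hcv : (c, v) ∈ R
      · by_cases hdel : ∃ b, NRel R c b ∧ Relation.TransGen (NRel R) b v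
        · obtain ⟨b, hb, hT⟩ := hdel
          exact hnd1 ⟨c, hxc, hT.head hb⟩
        · exact IH v hgt hvw hcv hR2 hdel hnd2
      · exact hnd1 ⟨c, hxc, Relation.TransGen.single ⟨hgt, hcv⟩⟩

lemma iwoipid_min_aux {n : ℕ} {R S : Set (Fin n × Fin n)}
    (hInc : IncR S ⊆ IncR R)
    (hS4 : ∀ a b c : Fin n, a < b → b < c → (a, c) ∈ S → (a, b) ∈ S ∨ (b, c) ∈ S)
    {c x : Fin n} (h : Relation.TransGen (NRel R) x c) : (x, c) ∈ S → False := by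
  induction h using Relation.TransGen.head_induction_on with
  | single h =>
    intro hxc
    exact h.2 (hInc ⟨hxc, le_of_lt h.1⟩).1
  | head hxd hdc IH =>
    intro hxc
    have hdltc := transGen_nrel_lt hdc
    rcases hS4 _ _ _ hxd.1 hdltc hxc with h1 | h2
    · exact hxd.2 (hInc ⟨h1, le_of_lt hxd.1⟩).1
    · exact IH h2

/-- IWOIPid(≺) is the weak order minimal poset of IWOIP(n) above ≺. -/
theorem IWOIPid_minimal_above (n : ℕ) (R : Set (Fin n × Fin n))
    (hrefl : IsReflRel R) (htrans : IsTransRel R) (hanti : IsAntisymRel R) :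
    MemIWOIP (IWOIPid R) ∧ WOLE R (IWOIPid R) ∧
    (∀ S : Set (Fin n × Fin n), MemIWOIP S → WOLE R S → WOLE (IWOIPid R) S) := by
  refine ⟨⟨?_, ?_, ?_, ?_⟩, ⟨?_, ?_⟩, ?_⟩
  · -- reflexivity
    intro a
    refine ⟨hrefl a, ?_⟩
    rintro ⟨b, hb, hT⟩
    exact lt_irrefl a (transGen_nrel_lt (hT.head hb))
  · -- transitivity
    intro u v w hp hq
    obtain ⟨hpR, hpND⟩ := hp
    obtain ⟨hqR, hqND⟩ := hq
    refine ⟨htrans _ _ _ hpR hqR, ?_⟩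
    rintro ⟨b, hub, hbw⟩
    have hTG : Relation.TransGen (NRel R) u w := hbw.head hub
    rcases lt_trichotomy v u with hvu | heq | huv
    · refine hqND ⟨u, ⟨hvu, fun h' => ?_⟩, hTG⟩
      exact ne_of_lt hvu ((hanti u v hpR h').symm)
    · subst heq; exact hqND ⟨b, hub, hbw⟩
    · rcases lt_trichotomy v w with hvw | heq | hwv
      · exact iwoipid_main_trans htrans hTG v huv hvw hpR hqR hpND hqND
      · subst heq; exact hpND ⟨b, hub, hbw⟩
      · refine hpND ⟨b, hub, hbw.tail ⟨hwv, fun h' => ?_⟩⟩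
        exact ne_of_lt hwv ((hanti v w hqR h').symm)
  · -- antisymmetry
    intro u v h1 h2
    exact hanti u v h1.1 h2.1
  · -- IWOIP condition
    intro a b c hab hbc hac
    obtain ⟨hacR, hacND⟩ := hac
    by_contra h
    push_neg at h
    obtain ⟨h1, h2⟩ := h
    by_cases hab' : (a, b) ∈ R
    · have hdab : (a, b) ∈ {p : Fin n × Fin n |
          ∃ d, NRel R p.1 d ∧ Relation.TransGen (NRel R) d p.2} := by
        by_contra hd; exact h1 ⟨hab', hd⟩
      obtain ⟨e, hae, heb⟩ := hdab
      by_cases hbc' : (b, c) ∈ R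
      · have hdbc : (b, c) ∈ {p : Fin n × Fin n |
            ∃ d, NRel R p.1 d ∧ Relation.TransGen (NRel R) d p.2} := by
          by_contra hd; exact h2 ⟨hbc', hd⟩
        obtain ⟨f, hbf, hfc⟩ := hdbc
        exact hacND ⟨e, hae, heb.trans ((hfc.head hbf))⟩
      · exact hacND ⟨e, hae, heb.tail ⟨hbc, hbc'⟩⟩
    · by_cases hbc' : (b, c) ∈ R
      · have hdbc : (b, c) ∈ {p : Fin n × Fin n |
            ∃ d, NRel R p.1 d ∧ Relation.TransGen (NRel R) d p.2} := by
          by_contra hd; exact h2 ⟨hbc', hd⟩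
        obtain ⟨f, hbf, hfc⟩ := hdbc
        exact hacND ⟨b, ⟨hab, hab'⟩, hfc.head hbf⟩
      · exact hacND ⟨b, ⟨hab, hab'⟩, Relation.TransGen.single ⟨hbc, hbc'⟩⟩
  · -- IncR (IWOIPid R) ⊆ IncR R
    rintro p ⟨⟨hpR, _⟩, hle⟩
    exact ⟨hpR, hle⟩
  · -- DecR R ⊆ DecR (IWOIPid R)
    rintro p ⟨hpR, hle⟩
    refine ⟨⟨hpR, ?_⟩, hle⟩
    rintro ⟨b, hb, hT⟩
    exact absurd (transGen_nrel_lt (hT.head hb)) (not_lt.mpr hle)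
  · -- minimality
    rintro S ⟨_, _, _, hS4⟩ ⟨hWInc, hWDec⟩
    constructor
    · rintro p ⟨hpS, hle⟩
      have hpR := (hWInc ⟨hpS, hle⟩).1
      refine ⟨⟨hpR, ?_⟩, hle⟩
      rintro ⟨b, hb, hT⟩
      exact iwoipid_min_aux hWInc hS4 (hT.head hb) hpS
    · rintro p ⟨⟨hpR, _⟩, hle⟩
      exact hWDec ⟨hpR, hle⟩
end
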